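/- arXiv:1809.10881 — 3 statements merged into one kernel-verified Lean document; each statement's English description precedes it below -/
import Mathlib

section
/- Let X be a proper geodesic δ-hyperbolic space and Γ a group acting properly by isometries on X. For every nonempty compact subset K ⊆ X, the complement of the K-radial limit set in the Gromov boundary is contained in the Γ-orbit of L_K: ∂X \ Λ_rad^K ⊆ Γ·L_K. -/
open Filter Topology Metric Set MeasureTheory Pointwise
open scoped symmDiff ENNReal NNReal

noncomputable section

namespace SPR

variable {X : Type} [MetricSpace X]

/-- The Gromov product of `x` and `y` seen from `z`. -/
def gromovProd (x y z : X) : ℝ := (dist x z + dist y z - dist x y) / 2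

/-- `X` is `δ`-hyperbolic: the four point inequality holds. -/
def GromovHyperbolicWith (δ : ℝ) (X : Type) [MetricSpace X] : Prop :=
  ∀ x y z t : X, min (gromovProd x y t) (gromovProd y z t) - δ ≤ gromovProd x z t

/-- `c` parametrizes a geodesic (by arc length) on the set `I` of times. -/
def IsGeodesicOn (c : ℝ → X) (I : Set ℝ) : Prop :=
  ∀ s ∈ I, ∀ t ∈ I, dist (c s) (c t) = |s - t|

/-- Every pair of points of `X` is joined by a geodesic. -/
def GeodesicSpace (X : Type) [MetricSpace X] : Prop :=
  ∀ x y : X, ∃ c : ℝ → X,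
    c 0 = x ∧ c (dist x y) = y ∧ IsGeodesicOn c (Set.Icc 0 (dist x y))

/-- A geodesic ray, parametrized by `[0,∞)`. -/
def IsGeodesicRay (c : ℝ → X) : Prop := IsGeodesicOn c (Set.Ici 0)

/-- The action of `Γ` on `X` is (metrically) proper. -/
def ProperAction (Γ : Type) (X : Type) [Group Γ] [MetricSpace X] [MulAction Γ X] : Prop :=
  ∀ L : Set X, IsCompact L → {γ : Γ | ∃ x ∈ L, γ • x ∈ L}.Finite

variable {Γ : Type} [Group Γ] [MulAction Γ X]

/-- The critical exponent (exponential growth rate) of a subset `S` of `Γ`,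
for the action on `X` with base point `o`. -/
def critExp (o : X) (S : Set Γ) : ℝ :=
  Filter.limsup
    (fun r : ℝ => Real.log (Nat.card {γ : Γ // γ ∈ S ∧ dist o (γ • o) ≤ r}) / r)
    Filter.atTop

/-- The critical exponent `h_Γ` of the whole group. -/
def fullCritExp (Γ : Type) [Group Γ] [MulAction Γ X] (o : X) : ℝ :=
  critExp o (Set.univ : Set Γ)

/-- The set `Γ_K` of elements `γ ∈ Γ` for which there are `x, y ∈ K` and a geodesic
from `x` to `γ y` meeting `Γ ⬝ K` only inside `K ∪ γ K`. -/
def gammaK (Γ : Type) [Group Γ] [MulAction Γ X] (K : Set X) : Set Γ :=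
  {γ : Γ | ∃ x ∈ K, ∃ y ∈ K, ∃ c : ℝ → X,
    c 0 = x ∧ c (dist x (γ • y)) = γ • y ∧ IsGeodesicOn c (Set.Icc 0 (dist x (γ • y))) ∧
    (c '' Set.Icc 0 (dist x (γ • y))) ∩ (⋃ g : Γ, g • K) ⊆ K ∪ γ • K}

/-- The entropy at infinity `h_Γ^∞`. -/
def entropyAtInfinity (Γ : Type) [Group Γ] [MulAction Γ X] (o : X) : ℝ :=
  sInf {h : ℝ | ∃ K : Set X, IsCompact K ∧ h = critExp o (gammaK Γ K)}

/-- The action of `Γ` on `X` is strongly positively recurrent (it has a growth gap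
at infinity). -/
def SPRAction (Γ : Type) [Group Γ] [MulAction Γ X] (o : X) : Prop :=
  entropyAtInfinity Γ o < fullCritExp Γ o

/-! ### The Gromov boundary -/

theorem gromovProd_ge (x y z w : X) :
    gromovProd x y z - dist z w ≤ gromovProd x y w := by
  have h1 : dist x z ≤ dist x w + dist w z := dist_triangle x w z
  have h2 : dist y z ≤ dist y w + dist w z := dist_triangle y w z
  have h3 : dist w z = dist z w := dist_comm w z
  simp only [gromovProd]
  linarith

/-- A sequence converging to infinity. -/
def SeqToInf (o : X) (u : ℕ → X) : Prop :=
  Tendsto (fun p : ℕ × ℕ => gromovProd (u p.1) (u p.2) o) atTop atTop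

/-- Two sequences converging to infinity define the same boundary point. -/
def seqRel (o : X) (u v : {u : ℕ → X // SeqToInf o u}) : Prop :=
  Tendsto (fun n => gromovProd (u.1 n) (v.1 n) o) atTop atTop

/-- The Gromov boundary of `X` (described with base point `o`). -/
def GromovBoundary (o : X) : Type := Quot (seqRel o)

def mkBoundary (o : X) (u : {u : ℕ → X // SeqToInf o u}) : GromovBoundary o :=
  Quot.mk (seqRel o) u

instance (o : X) : TopologicalSpace (GromovBoundary o) :=
  inferInstanceAs (TopologicalSpace (Quot (seqRel o)))

instance (o : X) : MeasurableSpace (GromovBoundary o) := borel (GromovBoundary o)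

/-- A ray `c` ends at the boundary point `ξ`. -/
def endsAt (o : X) (c : ℝ → X) (ξ : GromovBoundary o) : Prop :=
  ∃ h : SeqToInf o (fun n : ℕ => c n), mkBoundary o ⟨fun n : ℕ => c n, h⟩ = ξ

/-- The bordification `X ∪ ∂X` of `X`. -/
def Bord (o : X) : Type := X ⊕ GromovBoundary o

def Bord.ofX (o : X) (x : X) : Bord o := Sum.inl x

def Bord.ofB (o : X) (ξ : GromovBoundary o) : Bord o := Sum.inr ξ

/-- Extension of the Gromov product: a point of `X` and a boundary point,
seen from `base`; infimum over representative sequences of the liminf. -/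
def gpPB (o base x : X) (ξ : GromovBoundary o) : ℝ :=
  sInf {t : ℝ | ∃ u : {u : ℕ → X // SeqToInf o u}, mkBoundary o u = ξ ∧
    t = Filter.liminf (fun n => gromovProd x (u.1 n) base) Filter.atTop}

/-- Extension of the Gromov product to two boundary points, seen from `base`. -/
def gpBB (o base : X) (ξ η : GromovBoundary o) : EReal :=
  sInf {t : EReal | ∃ u v : {u : ℕ → X // SeqToInf o u},
    mkBoundary o u = ξ ∧ mkBoundary o v = η ∧
    t = Filter.liminf (fun n => ((gromovProd (u.1 n) (v.1 n) base : ℝ) : EReal)) Filter.atTop}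

/-- The Gromov product of two points of the bordification `X ∪ ∂X`, seen from `base`. -/
def gpE (o base : X) (p q : X ⊕ GromovBoundary o) : EReal :=
  match p, q with
  | Sum.inl x, Sum.inl y => ((gromovProd x y base : ℝ) : EReal)
  | Sum.inl x, Sum.inr ξ => ((gpPB o base x ξ : ℝ) : EReal)
  | Sum.inr ξ, Sum.inl x => ((gpPB o base x ξ : ℝ) : EReal)
  | Sum.inr ξ, Sum.inr η => gpBB o base ξ η

/-- The topology of the bordification: generated by the open subsets of `X`
together with the sets `{p | ⟨p,ξ⟩_o > T}`. -/
instance (o : X) : TopologicalSpace (Bord o) :=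
  TopologicalSpace.generateFrom
    ({V : Set (Bord o) | ∃ U : Set X, IsOpen U ∧ V = Bord.ofX o '' U} ∪
     {V : Set (Bord o) | ∃ (ξ : GromovBoundary o) (T : ℝ),
        V = {p : Bord o | (T : EReal) < gpE o o p (Bord.ofB o ξ)}})

/-- `c` together with its interval of definition `I` is a geodesic joining
the point `x ∈ X` to the point `p` of the bordification. -/
def JoinsBord (o : X) (c : ℝ → X) (I : Set ℝ) (x : X) (p : Bord o) : Prop :=
  (∃ y : X, p = Bord.ofX o y ∧ I = Set.Icc 0 (dist x y) ∧ c 0 = x ∧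
    c (dist x y) = y ∧ IsGeodesicOn c I) ∨
  (∃ ξ : GromovBoundary o, p = Bord.ofB o ξ ∧ I = Set.Ici 0 ∧ c 0 = x ∧
    IsGeodesicRay c ∧ endsAt o c ξ)

/-- The shadow `O_o(x,r)`: points of `X ∪ ∂X` joined to `o` by a geodesic
meeting the closed ball `B(x,r)`. -/
def shadow (o x : X) (r : ℝ) : Set (Bord o) :=
  {p | ∃ (c : ℝ → X) (I : Set ℝ), JoinsBord o c I o p ∧ ∃ t ∈ I, c t ∈ Metric.closedBall x r}

/-- The `K`-radial limit set. -/
def radialLimitSet (o : X) (Γ : Type) [Group Γ] [MulAction Γ X] (K : Set X) :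
    Set (GromovBoundary o) :=
  {ξ | ∃ c : ℝ → X, IsGeodesicRay c ∧ endsAt o c ξ ∧
    {γ : Γ | ∃ t : ℝ, 0 ≤ t ∧ c t ∈ γ • K}.Infinite}

/-- The radial limit set. -/
def radialLimitSetFull (o : X) (Γ : Type) [Group Γ] [MulAction Γ X] :
    Set (GromovBoundary o) :=
  {ξ | ∃ K : Set X, IsCompact K ∧ ξ ∈ radialLimitSet o Γ K}

/-- The set `𝓛_K` of endpoints of geodesic rays starting in `K` and meeting
`Γ ⬝ K` only inside `K`. -/
def LK (o : X) (Γ : Type) [Group Γ] [MulAction Γ X] (K : Set X) :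
    Set (GromovBoundary o) :=
  {ξ | ∃ c : ℝ → X, IsGeodesicRay c ∧ c 0 ∈ K ∧ endsAt o c ξ ∧
    (c '' Set.Ici 0) ∩ (⋃ g : Γ, g • K) ⊆ K}

/-- The neighbourhood `U_K^T` of `𝓛_K` in the bordification. -/
def UKT (o : X) (Γ : Type) [Group Γ] [MulAction Γ X] (K : Set X) (T : ℝ) :
    Set (Bord o) :=
  {p | ∃ ξ ∈ LK o Γ K, (T : EReal) ≤ gpE o o p (Bord.ofB o ξ)}

/-! ### The boundary action -/

section IsometricAction

variable [IsIsometricSMul Γ X]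

theorem gromovProd_smul (γ : Γ) (x y o : X) :
    gromovProd (γ • x) (γ • y) o = gromovProd x y (γ⁻¹ • o) := by
  have h1 : dist (γ • x) o = dist x (γ⁻¹ • o) := by
    conv_lhs => rw [← smul_inv_smul γ o]
    exact dist_smul γ x (γ⁻¹ • o)
  have h2 : dist (γ • y) o = dist y (γ⁻¹ • o) := by
    conv_lhs => rw [← smul_inv_smul γ o]
    exact dist_smul γ y (γ⁻¹ • o)
  have h3 : dist (γ • x) (γ • y) = dist x y := dist_smul γ x y
  simp only [gromovProd, h1, h2, h3]

theorem tendsto_gp_smul {ι : Type} {l : Filter ι} (o : X) (γ : Γ) {u v : ι → X}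
    (h : Tendsto (fun n => gromovProd (u n) (v n) o) l atTop) :
    Tendsto (fun n => gromovProd (γ • u n) (γ • v n) o) l atTop := by
  refine tendsto_atTop_mono (fun n => ?_)
    (tendsto_atTop_add_const_right _ (-(dist o (γ⁻¹ • o))) h)
  have h1 := gromovProd_ge (u n) (v n) o (γ⁻¹ • o)
  rw [gromovProd_smul]
  linarith

/-- The action of `Γ` on the Gromov boundary. -/
def boundarySmul (o : X) (γ : Γ) : GromovBoundary o → GromovBoundary o :=
  Quot.map
    (fun u => ⟨fun n => γ • u.1 n,
      tendsto_gp_smul o γ (u := fun p : ℕ × ℕ => u.1 p.1) (v := fun p : ℕ × ℕ => u.1 p.2) u.2⟩)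
    (fun _ _ huv => tendsto_gp_smul o γ huv)

/-- The diagonal action of `γ` on `∂X × ∂X`. -/
def diagSmul (o : X) (γ : Γ) (p : GromovBoundary o × GromovBoundary o) :
    GromovBoundary o × GromovBoundary o :=
  (boundarySmul o γ p.1, boundarySmul o γ p.2)

end IsometricAction

/-! ### Patterson–Sullivan measures -/

/-- A slowly increasing function, in the sense of Patterson. -/
def SlowlyIncreasing (θ : ℝ → ℝ) : Prop :=
  ∀ ε : ℝ, 0 < ε → ∃ t₀ : ℝ, ∀ t : ℝ, t₀ ≤ t → ∀ u : ℝ, 0 ≤ u →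
    θ (t + u) ≤ Real.exp (ε * u) * θ t

/-- The Patterson weight `θ(d(o,γo)) e^{-s d(o,γo)}`. -/
def psWeight (Γ : Type) [Group Γ] [MulAction Γ X] (o : X) (θ : ℝ → ℝ) (s : ℝ)
    (γ : Γ) : ℝ :=
  θ (dist o (γ • o)) * Real.exp (-s * dist o (γ • o))

/-- `ν` is a Patterson–Sullivan measure of `Γ` on the Gromov boundary:
a probability measure obtained as a weak-* limit, along some sequence `sₙ ↓ h_Γ`,
of the normalized Patterson-weighted orbital measures. -/
def IsPSMeasure (Γ : Type) [Group Γ] [MulAction Γ X] (o : X)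
    (ν : Measure (GromovBoundary o)) : Prop :=
  IsProbabilityMeasure ν ∧
  ∃ θ : ℝ → ℝ, (∀ t, 0 < θ t) ∧ Monotone θ ∧ SlowlyIncreasing θ ∧
    (∀ s : ℝ, Summable (psWeight Γ o θ s) ↔ fullCritExp Γ o < s) ∧
    ∃ sq : ℕ → ℝ, (∀ n, fullCritExp Γ o < sq n) ∧
      Tendsto sq atTop (nhds (fullCritExp Γ o)) ∧
      ∀ f : Bord o → ℝ, Continuous f → (∃ M : ℝ, ∀ p, |f p| ≤ M) →
        Tendsto (fun n =>
            (∑' γ : Γ, psWeight Γ o θ (sq n) γ * f (Bord.ofX o (γ • o))) /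
            (∑' γ : Γ, psWeight Γ o θ (sq n) γ)) atTop
          (nhds (∫ ξ, f (Bord.ofB o ξ) ∂ν))

/-! ### The Bowen–Margulis current and the abstract geodesic flow -/

section BowenMargulis

variable [IsIsometricSMul Γ X]

/-- `μ` is a Bowen–Margulis current associated to the Patterson–Sullivan measure `ν`:
a `Γ`-invariant measure on `∂X × ∂X`, vanishing on the diagonal, absolutely continuous
with respect to `ν ⊗ ν` with density comparable to `e^{2 h_Γ ⟨η,ξ⟩_o}`. -/
def IsBMCurrent (Γ : Type) [Group Γ] [MulAction Γ X] [IsIsometricSMul Γ X] (o : X)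
    (ν : Measure (GromovBoundary o))
    (μ : Measure (GromovBoundary o × GromovBoundary o)) : Prop :=
  μ {p | p.1 = p.2} = 0 ∧
  (∀ γ : Γ, Measure.map (diagSmul o γ) μ = μ) ∧
  μ ≪ ν.prod ν ∧
  ∃ C₀ : ℝ, 0 < C₀ ∧
    ∀ᵐ p ∂(ν.prod ν), p.1 ≠ p.2 →
      C₀⁻¹ * Real.exp (2 * fullCritExp Γ o * (gpBB o o p.1 p.2).toReal)
          ≤ (μ.rnDeriv (ν.prod ν) p).toReal ∧
      (μ.rnDeriv (ν.prod ν) p).toReal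
          ≤ C₀ * Real.exp (2 * fullCritExp Γ o * (gpBB o o p.1 p.2).toReal)

/-- The phase space `SX = ∂X × ∂X × ℝ` of the abstract geodesic flow. -/
def SX (o : X) : Type := (GromovBoundary o × GromovBoundary o) × ℝ

instance (o : X) : MeasurableSpace (SX o) :=
  inferInstanceAs (MeasurableSpace ((GromovBoundary o × GromovBoundary o) × ℝ))

/-- The geodesic flow on `SX`. -/
def flowSX (o : X) (t : ℝ) (v : SX o) : SX o := (v.1, v.2 + t)

/-- The cocycle `β(γ,ξ) = h_Γ⁻¹ log (d(γ⁻¹)_*ν/dν)(ξ)`. -/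
def betaCocycle (Γ : Type) [Group Γ] [MulAction Γ X] [IsIsometricSMul Γ X] (o : X)
    (ν : Measure (GromovBoundary o)) (γ : Γ) (ξ : GromovBoundary o) : ℝ :=
  (fullCritExp Γ o)⁻¹ *
    Real.log ((Measure.map (boundarySmul o γ⁻¹) ν).rnDeriv ν ξ).toReal

/-- The (measurable) action of `Γ` on `SX`:
`γ ⬝ (η,ξ,t) = (γη, γξ, t + κ_γ(η,ξ))`. -/
def smulSX (Γ : Type) [Group Γ] [MulAction Γ X] [IsIsometricSMul Γ X] (o : X)
    (ν : Measure (GromovBoundary o)) (γ : Γ) (v : SX o) : SX o :=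
  ((boundarySmul o γ v.1.1, boundarySmul o γ v.1.2),
    v.2 + (betaCocycle Γ o ν γ v.1.2 - betaCocycle Γ o ν γ v.1.1) / 2)

/-- The Bowen–Margulis measure `m = μ ⊗ dt` on `SX`. -/
def bmMeasure (o : X) (μ : Measure (GromovBoundary o × GromovBoundary o)) :
    Measure (SX o) :=
  μ.prod (volume : Measure ℝ)

/-- `D` is a Borel fundamental domain for the `Γ`-action on `SX`. -/
def IsFundDom (Γ : Type) [Group Γ] [MulAction Γ X] [IsIsometricSMul Γ X] (o : X)
    (ν : Measure (GromovBoundary o)) (μ : Measure (GromovBoundary o × GromovBoundary o))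
    (D : Set (SX o)) : Prop :=
  MeasurableSet D ∧ ∀ᵐ v ∂(bmMeasure o μ), ∃! γ : Γ, smulSX Γ o ν γ v ∈ D

/-- A subset of `SX` is `Γ`-invariant up to measure zero. -/
def GammaInvariant (Γ : Type) [Group Γ] [MulAction Γ X] [IsIsometricSMul Γ X] (o : X)
    (ν : Measure (GromovBoundary o)) (μ : Measure (GromovBoundary o × GromovBoundary o))
    (B : Set (SX o)) : Prop :=
  ∀ γ : Γ, bmMeasure o μ (B ∆ (smulSX Γ o ν γ ⁻¹' B)) = 0

/-- The measure `m̄` of a subset of `SX`, computed via the fundamental domain `D`. -/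
def mbar (o : X) (μ : Measure (GromovBoundary o × GromovBoundary o))
    (D B : Set (SX o)) : ℝ≥0∞ :=
  bmMeasure o μ (B ∩ D)

/-- Conservativity of the geodesic flow on `(SX, 𝓑_Γ, m̄)`: almost every point of
a `Γ`-invariant set of positive finite measure returns at unboundedly large times. -/
def ConservativeFlow (Γ : Type) [Group Γ] [MulAction Γ X] [IsIsometricSMul Γ X] (o : X)
    (ν : Measure (GromovBoundary o)) (μ : Measure (GromovBoundary o × GromovBoundary o))
    (D : Set (SX o)) : Prop :=
  ∀ B : Set (SX o), MeasurableSet B → GammaInvariant Γ o ν μ B →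
    0 < mbar o μ D B → mbar o μ D B < ⊤ →
    bmMeasure o μ ((B \ {v | ∀ T : ℝ, ∃ t : ℝ, T ≤ t ∧ flowSX o t v ∈ B}) ∩ D) = 0

/-- Ergodicity of the geodesic flow on `(SX, 𝓑_Γ, m̄)`. -/
def ErgodicFlow (Γ : Type) [Group Γ] [MulAction Γ X] [IsIsometricSMul Γ X] (o : X)
    (ν : Measure (GromovBoundary o)) (μ : Measure (GromovBoundary o × GromovBoundary o))
    (D : Set (SX o)) : Prop :=
  ∀ B : Set (SX o), MeasurableSet B → GammaInvariant Γ o ν μ B →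
    (∀ t : ℝ, bmMeasure o μ (B ∆ (flowSX o t ⁻¹' B)) = 0) →
    mbar o μ D B = 0 ∨ mbar o μ D Bᶜ = 0

/-- Ergodicity of the diagonal `Γ`-action on `(∂²X, μ)`. -/
def ErgodicBoundaryAction (Γ : Type) [Group Γ] [MulAction Γ X] [IsIsometricSMul Γ X] (o : X)
    (μ : Measure (GromovBoundary o × GromovBoundary o)) : Prop :=
  ∀ A : Set (GromovBoundary o × GromovBoundary o), MeasurableSet A →
    (∀ γ : Γ, μ (A ∆ (diagSmul o γ ⁻¹' A)) = 0) →
    μ A = 0 ∨ μ Aᶜ = 0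

/-- The Poincaré series of `Γ` diverges at `s = h_Γ`. -/
def Divergent (Γ : Type) [Group Γ] [MulAction Γ X] (o : X) : Prop :=
  ¬ Summable (fun γ : Γ => Real.exp (-(fullCritExp Γ o) * dist (γ • o) o))

end BowenMargulis

/-! ### Almost invariant vectors, co-amenability, properties (T) and (FM) -/

/-- The Koopman representation of the `Γ`-action on the countable set `Y`
almost has invariant vectors: for every finite `S ⊆ Γ` and `ε > 0` there is a
nonzero `φ ∈ ℓ²(Y)` with `‖ρ(γ)φ - φ‖ < ε ‖φ‖` for all `γ ∈ S`
(stated with squared `ℓ²` norms). -/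
def KoopmanAlmostInvariant (Γ Y : Type) [Group Γ] [MulAction Γ Y] : Prop :=
  ∀ S : Finset Γ, ∀ ε : ℝ, 0 < ε → ∃ φ : Y → ℝ, Memℓp φ 2 ∧ φ ≠ 0 ∧
    ∀ γ ∈ S, ∑' y : Y, (φ (γ⁻¹ • y) - φ y) ^ 2 < ε ^ 2 * ∑' y : Y, (φ y) ^ 2

/-- `Γ'` is co-amenable in `Γ`: the Koopman representation of `Γ` on `ℓ²` of the
coset space almost has invariant vectors. -/
def CoAmenable (Γ : Type) [Group Γ] (Γ' : Subgroup Γ) : Prop :=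
  KoopmanAlmostInvariant Γ (Γ ⧸ Γ')

/-- A unitary representation almost has invariant vectors. -/
def AlmostInvariantVectors {Γ : Type} [Group Γ] {H : Type} [NormedAddCommGroup H]
    [InnerProductSpace ℝ H] (ρ : Γ →* (H ≃ₗᵢ[ℝ] H)) : Prop :=
  ∀ S : Finset Γ, ∀ ε : ℝ, 0 < ε → ∃ φ : H, φ ≠ 0 ∧ ∀ γ ∈ S, ‖ρ γ φ - φ‖ < ε * ‖φ‖

/-- Kazhdan's property (T): every unitary representation which almost has
invariant vectors has a nonzero invariant vector. -/
def HasPropertyT (Γ : Type) [Group Γ] : Prop :=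
  ∀ (H : Type) [NormedAddCommGroup H] [InnerProductSpace ℝ H] [CompleteSpace H],
    ∀ ρ : Γ →* (H ≃ₗᵢ[ℝ] H), AlmostInvariantVectors ρ →
      ∃ φ : H, φ ≠ 0 ∧ ∀ γ : Γ, ρ γ φ = φ

/-- Property (FM): every action of `Γ` on a countable set whose Koopman
representation almost has invariant vectors has a finite orbit. -/
def HasPropertyFM (Γ : Type) [Group Γ] : Prop :=
  ∀ (Y : Type) [Countable Y], ∀ (_ : MulAction Γ Y),
    KoopmanAlmostInvariant Γ Y → ∃ y : Y, (MulAction.orbit Γ y).Finite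

/-! ### Twisted Poincaré series -/

/-- The twisted Poincaré series `A(s) = Σ e^{-s d(γ o, o)} ρ(γ)` is bounded. -/
def TwistedBounded {Γ : Type} [Group Γ] [MulAction Γ X] {H : Type}
    [NormedAddCommGroup H] [InnerProductSpace ℝ H]
    (ρ : Γ →* (H ≃ₗᵢ[ℝ] H)) (o : X) (s : ℝ) : Prop :=
  ∃ M : ℝ, ∀ S : Finset Γ,
    ‖∑ γ ∈ S, Real.exp (-s * dist (γ • o) o) •
        ((ρ γ).toLinearIsometry.toContinuousLinearMap : H →L[ℝ] H)‖ ≤ M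

/-- The critical exponent `h_ρ` of the representation `ρ`. -/
def twistedCritExp {Γ : Type} [Group Γ] [MulAction Γ X] {H : Type}
    [NormedAddCommGroup H] [InnerProductSpace ℝ H]
    (ρ : Γ →* (H ≃ₗᵢ[ℝ] H)) (o : X) : ℝ :=
  sInf {s : ℝ | 0 ≤ s ∧ TwistedBounded ρ o s}

/-! ### Word length and the horocone over a Cayley graph -/

/-- The word length of `γ` with respect to the generating set `S`. -/
def wordLength {P : Type} [Group P] (S : Set P) (γ : P) : ℕ :=
  sInf {n : ℕ | ∃ l : List P, l.length = n ∧ (∀ x ∈ l, x ∈ S) ∧ l.prod = γ}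

/-- `horoBase S γ = (√(|γ|² + 4) - |γ|)/2`, so that the orbital distance on the
horocone over the Cayley graph satisfies `e^{-d(γ o, o)} = (horoBase S γ)²`. -/
def horoBase {P : Type} [Group P] (S : Set P) (γ : P) : ℝ :=
  (Real.sqrt ((wordLength S γ : ℝ) ^ 2 + 4) - (wordLength S γ : ℝ)) / 2

/-! ### The twisted Poincaré series of a Koopman representation -/

/-- Boundedness of the twisted Poincaré series
`A(s) = Σ_γ e^{-s d(γ o, o)} ρ(γ)` for the Koopman representation of `Γ`
on `ℓ²` of the coset space of `Γ'` (stated with squared `ℓ²` norms). -/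
def KoopmanTwistedBounded {X : Type} [MetricSpace X] {Γ : Type} [Group Γ]
    [MulAction Γ X] (o : X) (Γ' : Subgroup Γ) (s : ℝ) : Prop :=
  ∃ M : ℝ, ∀ F : Finset Γ, ∀ φ : Γ ⧸ Γ' → ℝ, Memℓp φ 2 →
    ∑' y : Γ ⧸ Γ', (∑ γ ∈ F, Real.exp (-s * dist (γ • o) o) * φ (γ⁻¹ • y)) ^ 2
      ≤ M ^ 2 * ∑' y : Γ ⧸ Γ', (φ y) ^ 2

/-- The critical exponent `h_ρ` of the Koopman representation on `ℓ²(Γ'\Γ)`. -/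
def koopmanCritExp {X : Type} [MetricSpace X] {Γ : Type} [Group Γ]
    [MulAction Γ X] (o : X) (Γ' : Subgroup Γ) : ℝ :=
  sInf {s : ℝ | 0 ≤ s ∧ KoopmanTwistedBounded o Γ' s}

/-! ### Auxiliary lemmas for Statement 8 -/

theorem gromovProd_self_eq_dist (x o : X) : gromovProd x x o = dist x o := by
  simp [gromovProd]

/-- Lower bound for the Gromov product of two points on a geodesic ray. -/
theorem gp_ray_lower {c : ℝ → X} (h : IsGeodesicOn c (Set.Ici 0)) (o : X) {s t : ℝ}
    (hs : 0 ≤ s) (ht : 0 ≤ t) : min s t - dist (c 0) o ≤ gromovProd (c s) (c t) o := by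
  have h1 : dist (c 0) (c s) = s := by
    rw [h 0 (Set.mem_Ici.2 le_rfl) s (Set.mem_Ici.2 hs), zero_sub, abs_neg, abs_of_nonneg hs]
  have h2 : dist (c 0) (c t) = t := by
    rw [h 0 (Set.mem_Ici.2 le_rfl) t (Set.mem_Ici.2 ht), zero_sub, abs_neg, abs_of_nonneg ht]
  have h3 : dist (c s) (c t) = |s - t| := h s (Set.mem_Ici.2 hs) t (Set.mem_Ici.2 ht)
  have t1 := dist_triangle (c 0) o (c s)
  have t2 := dist_triangle (c 0) o (c t)
  have e1 := dist_comm o (c s)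
  have e2 := dist_comm o (c t)
  simp only [gromovProd]
  rcases le_total s t with hst | hst
  · rw [min_eq_left hst]
    rw [abs_of_nonpos (by linarith)] at h3
    linarith
  · rw [min_eq_right hst]
    rw [abs_of_nonneg (by linarith)] at h3
    linarith

/-- A geodesic ray converges to infinity. -/
theorem ray_seqToInf {c : ℝ → X} (h : IsGeodesicOn c (Set.Ici 0)) (o : X) :
    SeqToInf o (fun n : ℕ => c n) := by
  rw [SeqToInf, Filter.tendsto_atTop]
  intro M
  rw [eventually_atTop]
  refine ⟨(⌈M + dist (c 0) o⌉₊, ⌈M + dist (c 0) o⌉₊), ?_⟩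
  rintro ⟨i, j⟩ ⟨hi, hj⟩
  have hi' : M + dist (c 0) o ≤ (i : ℝ) := (Nat.le_ceil _).trans (Nat.cast_le.2 hi)
  have hj' : M + dist (c 0) o ≤ (j : ℝ) := (Nat.le_ceil _).trans (Nat.cast_le.2 hj)
  have hgp := gp_ray_lower h o i.cast_nonneg j.cast_nonneg
  have hmin : M + dist (c 0) o ≤ min (i : ℝ) j := le_min hi' hj'
  dsimp only
  linarith

theorem continuous_gromovProd_left (y z : X) : Continuous fun x : X => gromovProd x y z := by
  unfold gromovProd
  exact (((continuous_id.dist continuous_const).add continuous_const).sub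
    (continuous_id.dist continuous_const)).div_const 2

/-- Key construction: for any boundary point (given by a sequence `u`) and any point `x₀`,
there is a geodesic ray from `x₀` converging to the boundary point. -/
theorem exists_ray [ProperSpace X] {δ : ℝ} (hhyp : GromovHyperbolicWith δ X)
    (hgeo : GeodesicSpace X) (o x₀ : X) (u : ℕ → X) (hu : SeqToInf o u) :
    ∃ c : ℝ → X, c 0 = x₀ ∧ IsGeodesicOn c (Set.Ici 0) ∧ LipschitzWith 1 c ∧
      Tendsto (fun n : ℕ => gromovProd (c n) (u n) o) atTop atTop := by
  classical
  set 𝒰 : Ultrafilter ℕ := Ultrafilter.of atTop with h𝒰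
  have h𝒰le : (𝒰 : Filter ℕ) ≤ atTop := Ultrafilter.of_le atTop
  choose g hg0 hgd hggeo using fun n => hgeo x₀ (u n)
  set d : ℕ → ℝ := fun n => dist x₀ (u n) with hd
  have hd0 : ∀ n, 0 ≤ d n := fun n => dist_nonneg
  have hclamp : ∀ n (t : ℝ), min (max t 0) (d n) ∈ Set.Icc 0 (d n) := fun n t =>
    ⟨le_min (le_max_right t 0) (hd0 n), min_le_right _ _⟩
  set e : ℕ → ℝ → X := fun n t => g n (min (max t 0) (d n)) with he
  have heq : ∀ n (s t : ℝ),
      dist (e n s) (e n t) = |min (max s 0) (d n) - min (max t 0) (d n)| := fun n s t =>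
    hggeo n _ (hclamp n s) _ (hclamp n t)
  have hball : ∀ n (t : ℝ), e n t ∈ Metric.closedBall x₀ (max t 0) := by
    intro n t
    have h0 : (0 : ℝ) ∈ Set.Icc 0 (d n) := ⟨le_rfl, hd0 n⟩
    have := hggeo n 0 h0 _ (hclamp n t)
    rw [hg0 n] at this
    rw [Metric.mem_closedBall, dist_comm, this, zero_sub, abs_neg,
      abs_of_nonneg (hclamp n t).1]
    exact min_le_left _ _
  -- take limits along the ultrafilter
  have hlim : ∀ t : ℝ, ∃ x : X, Tendsto (fun n => e n t) 𝒰 (nhds x) := by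
    intro t
    obtain ⟨x, -, hx⟩ := (isCompact_closedBall x₀ (max t 0)).ultrafilter_le_nhds
      (𝒰.map (fun n => e n t)) (by
        rw [Ultrafilter.coe_map, le_principal_iff, Filter.mem_map]
        exact Filter.univ_mem' (fun n => hball n t))
    rw [Ultrafilter.coe_map] at hx
    exact ⟨x, hx⟩
  choose c hc using hlim
  -- d n → ∞
  have hdiag : Tendsto (fun n : ℕ => (n, n)) atTop (atTop : Filter (ℕ × ℕ)) := by
    rw [← prod_atTop_atTop_eq]
    exact tendsto_id.prodMk tendsto_id
  have hdist : Tendsto (fun n => dist (u n) o) atTop atTop := by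
    have h1 : Tendsto ((fun p : ℕ × ℕ => gromovProd (u p.1) (u p.2) o) ∘
        (fun n : ℕ => (n, n))) atTop atTop := Filter.Tendsto.comp hu hdiag
    exact h1.congr (fun n => gromovProd_self_eq_dist (u n) o)
  have hdn : Tendsto d atTop atTop := by
    refine tendsto_atTop_mono (fun n => ?_) (tendsto_atTop_add_const_right _ (-dist x₀ o) hdist)
    have := dist_triangle (u n) x₀ o
    have := dist_comm x₀ (u n)
    simp only [hd]
    linarith [dist_triangle (u n) o x₀, dist_comm (u n) x₀, dist_comm o x₀]
  -- c is a geodesic ray from x₀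
  have hc0 : c 0 = x₀ := by
    refine tendsto_nhds_unique (hc 0) ?_
    have : ∀ n, e n 0 = x₀ := by
      intro n
      simp only [he, max_self]
      rw [min_eq_left (by simpa using hd0 n), hg0 n]
    exact Tendsto.congr (fun n => (this n).symm) tendsto_const_nhds
  have hgeoc : IsGeodesicOn c (Set.Ici 0) := by
    intro s hs t ht
    rw [Set.mem_Ici] at hs ht
    have hev : ∀ᶠ n in (𝒰 : Filter ℕ), dist (e n s) (e n t) = |s - t| := by
      filter_upwards [h𝒰le (hdn.eventually (eventually_ge_atTop (max s t)))] with n hn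
      rw [heq n s t, max_eq_left hs, max_eq_left ht,
        min_eq_left ((le_max_left s t).trans hn), min_eq_left ((le_max_right s t).trans hn)]
    exact tendsto_nhds_unique ((hc s).dist (hc t))
      (Tendsto.congr' (EventuallyEq.symm hev) tendsto_const_nhds)
  have hlip : LipschitzWith 1 c := by
    rw [lipschitzWith_iff_dist_le_mul]
    intro s t
    rw [NNReal.coe_one, one_mul, Real.dist_eq]
    refine le_of_tendsto ((hc s).dist (hc t)) ?_
    refine Filter.Eventually.of_forall (fun n => ?_)
    rw [heq n s t]
    calc |min (max s 0) (d n) - min (max t 0) (d n)|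
        ≤ max |max s 0 - max t 0| |d n - d n| := abs_min_sub_min_le_max _ _ _ _
      _ = |max s 0 - max t 0| := by simp
      _ ≤ max |s - t| |0 - 0| := abs_max_sub_max_le_max _ _ _ _
      _ = |s - t| := by simp
  refine ⟨c, hc0, hgeoc, hlip, ?_⟩
  -- the ray converges to the boundary point of u
  rw [Filter.tendsto_atTop]
  intro M
  obtain ⟨N, hN⟩ := eventually_atTop.1 (hu.eventually (eventually_ge_atTop (M + δ)))
  have key : ∀ m : ℕ, N ≤ (m, m) → ∀ t : ℝ, 0 ≤ t →
      min (t - dist x₀ o) (M + δ) - δ ≤ gromovProd (c t) (u m) o := by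
    intro m hm t ht
    have hev : ∀ᶠ n in (𝒰 : Filter ℕ),
        min (t - dist x₀ o) (M + δ) - δ ≤ gromovProd (e n t) (u m) o := by
      have h1 : ∀ᶠ n in (atTop : Filter ℕ), m ≤ n ∧ t ≤ d n :=
        (eventually_ge_atTop m).and (hdn.eventually (eventually_ge_atTop t))
      filter_upwards [h𝒰le h1] with n hn
      obtain ⟨hn1, hn2⟩ := hn
      have het : e n t = g n t := by
        simp only [he]
        rw [max_eq_left ht, min_eq_left hn2]
      have ht' : t ∈ Set.Icc 0 (d n) := ⟨ht, hn2⟩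
      have d1 : dist (g n t) x₀ = t := by
        have := hggeo n t ht' 0 ⟨le_rfl, hd0 n⟩
        rw [hg0 n] at this
        rw [this, sub_zero, abs_of_nonneg ht]
      have d2 : dist (u n) x₀ = d n := dist_comm (u n) x₀
      have d3 : dist (g n t) (u n) = d n - t := by
        have := hggeo n t ht' (d n) ⟨hd0 n, le_rfl⟩
        rw [hgd n] at this
        rw [this, abs_of_nonpos (by linarith), neg_sub]
      have hgp : gromovProd (g n t) (u n) x₀ = t := by
        simp only [gromovProd, d1, d2, d3]
        ring
      have hgpo : t - dist x₀ o ≤ gromovProd (g n t) (u n) o := by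
        have := gromovProd_ge (g n t) (u n) x₀ o
        rw [hgp] at this
        exact this
      have hun : M + δ ≤ gromovProd (u n) (u m) o := by
        refine hN (n, m) ⟨?_, ?_⟩
        · exact le_trans hm.1 hn1
        · exact hm.2
      have hmin := min_le_min hgpo hun
      have := hhyp (g n t) (u n) (u m) o
      rw [het]
      linarith
    exact ge_of_tendsto (((continuous_gromovProd_left (u m) o).tendsto (c t)).comp (hc t)) hev
  rw [eventually_atTop]
  refine ⟨max (max N.1 N.2) ⌈M + δ + dist x₀ o⌉₊, fun n hn => ?_⟩
  have hn1 : N ≤ (n, n) :=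
    ⟨(le_max_left N.1 N.2).trans ((le_max_left _ _).trans hn),
     (le_max_right N.1 N.2).trans ((le_max_left _ _).trans hn)⟩
  have hn2 : M + δ + dist x₀ o ≤ (n : ℝ) :=
    (Nat.le_ceil _).trans (Nat.cast_le.2 ((le_max_right _ _).trans hn))
  have := key n hn1 n n.cast_nonneg
  have hminval : M ≤ min ((n : ℝ) - dist x₀ o) (M + δ) - δ :=
    le_sub_iff_add_le.2 (le_min (by linarith) (by linarith))
  linarith

/-- Let `X` be a proper geodesic `δ`-hyperbolic space and `Γ` a
group acting properly by isometries on `X`. For every nonempty compact subset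
`K ⊆ X`, the complement of the `K`-radial limit set in the Gromov boundary is
contained in the `Γ`-orbit of `𝓛_K`: `∂X \ Λ_rad^K ⊆ Γ·𝓛_K`. -/
theorem compl_radialLimitSet_subset_orbit_LK
    {X : Type} [MetricSpace X] [ProperSpace X]
    {Γ : Type} [Group Γ] [MulAction Γ X] [IsIsometricSMul Γ X]
    (δ : ℝ) (hδ : 0 < δ) (hhyp : GromovHyperbolicWith δ X) (hgeo : GeodesicSpace X)
    (hact : ProperAction Γ X) (o : X)
    (K : Set X) (hK : IsCompact K) (hKne : K.Nonempty) :
    ∀ ξ : GromovBoundary o, ξ ∉ radialLimitSet o Γ K →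
      ∃ γ : Γ, ∃ η ∈ LK o Γ K, boundarySmul o γ η = ξ := by
  classical
  intro ξ hξ
  obtain ⟨up, hup⟩ := Quot.exists_rep ξ
  obtain ⟨x₀, hx₀⟩ := hKne
  obtain ⟨c, hc0, hcray, hclip, hcten⟩ := exists_ray hhyp hgeo o x₀ up.1 up.2
  have hcseq : SeqToInf o (fun n : ℕ => c n) := ray_seqToInf hcray o
  have hcends : endsAt o c ξ := ⟨hcseq, by rw [← hup]; exact Quot.sound hcten⟩
  -- the set of group elements whose translate of K is met by the ray is finite
  have hfin : {γ : Γ | ∃ t : ℝ, 0 ≤ t ∧ c t ∈ γ • K}.Finite := by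
    by_contra h
    exact hξ ⟨c, hcray, hcends, h⟩
  set A := {γ : Γ | ∃ t : ℝ, 0 ≤ t ∧ c t ∈ γ • K} with hA
  set S := {t : ℝ | 0 ≤ t ∧ c t ∈ ⋃ g : Γ, g • K} with hS
  have hSeq : S = ⋃ γ ∈ A, {t : ℝ | 0 ≤ t ∧ c t ∈ γ • K} := by
    ext t
    simp only [hS, hA, Set.mem_setOf_eq, Set.mem_iUnion]
    constructor
    · rintro ⟨ht, γ, hγ⟩
      exact ⟨γ, ⟨t, ht, hγ⟩, ht, hγ⟩
    · rintro ⟨γ, _, ht, hm⟩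
      exact ⟨ht, ⟨γ, hm⟩⟩
  have hsmulK : ∀ γ : Γ, IsCompact (γ • K) := by
    intro γ
    rw [← Set.image_smul]
    exact hK.image (isometry_smul X γ).continuous
  have hclosed : IsClosed S := by
    rw [hSeq]
    refine hfin.isClosed_biUnion (fun γ _ => ?_)
    have : {t : ℝ | 0 ≤ t ∧ c t ∈ γ • K} = Set.Ici 0 ∩ c ⁻¹' (γ • K) := rfl
    rw [this]
    exact isClosed_Ici.inter ((hsmulK γ).isClosed.preimage hclip.continuous)
  have h0S : (0 : ℝ) ∈ S := by
    refine ⟨le_rfl, Set.mem_iUnion.2 ⟨1, ⟨x₀, hx₀, ?_⟩⟩⟩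
    show (1 : Γ) • x₀ = c 0
    rw [one_smul, hc0]
  have hBdd : BddAbove S := by
    rw [hSeq, hfin.bddAbove_biUnion]
    intro γ _
    obtain ⟨R, hR⟩ := (hsmulK γ).isBounded.subset_closedBall x₀
    refine ⟨R, fun t ⟨ht, hm⟩ => ?_⟩
    have := hcray 0 (Set.mem_Ici.2 le_rfl) t (Set.mem_Ici.2 ht)
    rw [hc0, zero_sub, abs_neg, abs_of_nonneg ht] at this
    have := hR hm
    rw [Metric.mem_closedBall, dist_comm] at this
    linarith
  set T := sSup S with hT
  have hTS : T ∈ S := hclosed.csSup_mem ⟨0, h0S⟩ hBdd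
  obtain ⟨hT0, hTmem⟩ := hTS
  obtain ⟨γ, hγ⟩ := Set.mem_iUnion.1 hTmem
  -- the translated ray
  set r : ℝ → X := fun s => γ⁻¹ • c (T + s) with hr
  have hrray : IsGeodesicRay r := by
    intro s hs t ht
    rw [Set.mem_Ici] at hs ht
    simp only [hr]
    rw [dist_smul γ⁻¹ (c (T + s)) (c (T + t)),
      hcray (T + s) (Set.mem_Ici.2 (by linarith)) (T + t) (Set.mem_Ici.2 (by linarith)),
      add_sub_add_left_eq_sub]
  have hr0 : r 0 ∈ K := by
    simp only [hr, add_zero]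
    exact Set.mem_smul_set_iff_inv_smul_mem.1 hγ
  have hrseq : SeqToInf o (fun n : ℕ => r n) := ray_seqToInf hrray o
  have hinter : (r '' Set.Ici 0) ∩ (⋃ g : Γ, g • K) ⊆ K := by
    rintro x ⟨⟨s, hs, rfl⟩, hx⟩
    rw [Set.mem_Ici] at hs
    obtain ⟨g, hg⟩ := Set.mem_iUnion.1 hx
    obtain ⟨k, hk, hgk⟩ := hg
    have hmemS : T + s ∈ S := by
      refine ⟨by linarith, Set.mem_iUnion.2 ⟨γ * g, ⟨k, hk, ?_⟩⟩⟩
      have : c (T + s) = γ • r s := by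
        simp only [hr]
        rw [smul_inv_smul]
      rw [this, ← hgk, ← mul_smul]
    have hle : T + s ≤ T := le_csSup hBdd hmemS
    have hs0 : s = 0 := le_antisymm (by linarith) hs
    rw [hs0]
    exact hr0
  -- the two remaining convergence facts
  have h1 : Tendsto (fun n : ℕ => gromovProd (c (T + n)) (c n) o) atTop atTop := by
    rw [Filter.tendsto_atTop]
    intro M
    filter_upwards [eventually_ge_atTop ⌈M + dist x₀ o⌉₊] with n hn
    have hgp := gp_ray_lower hcray o (add_nonneg hT0 n.cast_nonneg) n.cast_nonneg
    rw [hc0, min_eq_right (by linarith [(Nat.cast_nonneg n : (0:ℝ) ≤ n)])] at hgp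
    have : M + dist x₀ o ≤ (n : ℝ) := (Nat.le_ceil _).trans (Nat.cast_le.2 hn)
    linarith
  have h2 : Tendsto (fun n : ℕ => gromovProd (c (T + n)) (up.1 n) o) atTop atTop := by
    rw [Filter.tendsto_atTop]
    intro M
    filter_upwards [Filter.tendsto_atTop.1 h1 (M + δ), Filter.tendsto_atTop.1 hcten (M + δ)] with n ha hb
    have := hhyp (c (T + n)) (c n) (up.1 n) o
    have hmin : M + δ ≤ min (gromovProd (c (T + n)) (c n) o) (gromovProd (c n) (up.1 n) o) :=
      le_min ha hb
    linarith
  refine ⟨γ, mkBoundary o ⟨fun n : ℕ => r n, hrseq⟩, ⟨r, hrray, hr0, ⟨hrseq, rfl⟩, hinter⟩, ?_⟩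
  rw [← hup]
  refine Quot.sound ?_
  show Tendsto (fun n : ℕ => gromovProd (γ • r n) (up.1 n) o) atTop atTop
  refine h2.congr (fun n => ?_)
  simp only [hr]
  rw [smul_inv_smul]

end SPR
end
end

section
/- Let X be a proper geodesic δ-hyperbolic space, Γ a group acting properly by isometries on X with basepoint o, k ⊆ X a compact set containing o, and K the closed 6δ-neighbourhood of k. Then there exist a finite subset S ⊆ Γ and r₀ > 0 with the following property: for every x ∈ K, every y ∈ X ∪ ∂X, every geodesic c from x to y with c ∩ Γ·K ⊆ K, and every γ ∈ Γ, there exists β ∈ S·Γ_k such that ⟨x,γo⟩_{βo} ≤ r₀, ⟨y,γo⟩_{βo} ≤ r₀, and d(x,βo) ≥ ⟨y,γo⟩_x − r₀. -/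
open Filter Topology Metric Set MeasureTheory Pointwise
open scoped symmDiff ENNReal NNReal

noncomputable section

namespace SPR

variable {X : Type} [MetricSpace X]

variable {Γ : Type} [Group Γ] [MulAction Γ X]

section ThickeningAux

theorem gp_nonneg (x y z : X) : 0 ≤ gromovProd x y z := by
  have h := dist_triangle x z y
  have h2 : dist z y = dist y z := dist_comm z y
  simp only [gromovProd]; linarith

theorem gp_le_left (x y z : X) : gromovProd x y z ≤ dist x z := by
  have h := dist_triangle y x z
  have h1 : dist y x = dist x y := dist_comm y x
  simp only [gromovProd]; linarith

theorem gp_le_right (x y z : X) : gromovProd x y z ≤ dist y z := by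
  have h := dist_triangle x y z
  simp only [gromovProd]; linarith

theorem gp_comm (x y z : X) : gromovProd x y z = gromovProd y x z := by
  simp only [gromovProd, dist_comm x y]; ring

theorem gp_move2 (x y y' w : X) : gromovProd x y w ≤ gromovProd x y' w + dist y y' := by
  have h1 : dist y w ≤ dist y y' + dist y' w := dist_triangle y y' w
  have h2 : dist x y' ≤ dist x y + dist y y' := dist_triangle x y y'
  simp only [gromovProd]; linarith

theorem gp_le_base (x y z w : X) : gromovProd x y z ≤ gromovProd x y w + dist w z := by
  have h := gromovProd_ge x y z w
  have h2 : dist z w = dist w z := dist_comm z w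
  linarith

theorem myliminf_le {f : ℕ → ℝ} (h0 : ∀ n, 0 ≤ f n) {b : ℝ}
    (hb : ∃ᶠ n in Filter.atTop, f n ≤ b) : Filter.liminf f Filter.atTop ≤ b := by
  rw [Filter.liminf_eq]
  refine csSup_le ⟨0, Filter.Eventually.of_forall h0⟩ ?_
  intro a ha
  rcases ((ha : ∀ᶠ n in Filter.atTop, a ≤ f n).and_frequently hb).exists with ⟨n, h1, h2⟩
  linarith

theorem le_myliminf {f : ℕ → ℝ} {M : ℝ} (hM : ∀ n, f n ≤ M) {b : ℝ}
    (hb : ∀ᶠ n in Filter.atTop, b ≤ f n) : b ≤ Filter.liminf f Filter.atTop := by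
  rw [Filter.liminf_eq]
  refine le_csSup ⟨M, fun a ha => ?_⟩ hb
  rcases (ha : ∀ᶠ n in Filter.atTop, a ≤ f n).exists with ⟨n, h1⟩
  exact le_trans h1 (hM n)

theorem exists_gt_of_lt_liminf {f : ℕ → ℝ} (h0 : ∀ n, 0 ≤ f n) {b : ℝ}
    (h : b < Filter.liminf f Filter.atTop) : ∃ n, b < f n := by
  by_contra hcon
  push_neg at hcon
  have := myliminf_le h0 (Filter.Frequently.of_forall fun n => hcon n)
  linarith

theorem frequently_le_of_liminf_lt {f : ℕ → ℝ} {M : ℝ} (hM : ∀ n, f n ≤ M) {b : ℝ}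
    (h : Filter.liminf f Filter.atTop < b) : ∃ᶠ n in Filter.atTop, f n ≤ b := by
  by_contra hcon
  rw [Filter.not_frequently] at hcon
  have h2 : ∀ᶠ n in Filter.atTop, b ≤ f n := hcon.mono (fun n hn => le_of_not_ge hn)
  have := le_myliminf hM h2
  linarith

theorem geod_dist {σ : ℝ → X} {m : ℝ} (h : IsGeodesicOn σ (Icc 0 m)) {a b : ℝ}
    (ha : 0 ≤ a) (hab : a ≤ b) (hb : b ≤ m) : dist (σ a) (σ b) = b - a := by
  rw [h a ⟨ha, hab.trans hb⟩ b ⟨ha.trans hab, hb⟩, abs_of_nonpos (by linarith)]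
  ring

theorem geod_continuousOn {σ : ℝ → X} {I : Set ℝ} (h : IsGeodesicOn σ I) :
    ContinuousOn σ I := by
  rw [Metric.continuousOn_iff]
  intro b hb ε hε
  exact ⟨ε, hε, fun a ha hab => by rw [h a ha b hb]; rwa [Real.dist_eq] at hab⟩

theorem gp_on_geod {σ : ℝ → X} {m : ℝ} (h : IsGeodesicOn σ (Icc 0 m)) {a b : ℝ}
    (ha : 0 ≤ a) (hab : a ≤ b) (hbm : b ≤ m) :
    gromovProd (σ a) (σ b) (σ 0) = a := by
  have d1 : dist (σ 0) (σ a) = a := by simpa using geod_dist h le_rfl ha (hab.trans hbm)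
  have d2 : dist (σ 0) (σ b) = b := by simpa using geod_dist h le_rfl (ha.trans hab) hbm
  have d3 : dist (σ a) (σ b) = b - a := geod_dist h ha hab hbm
  simp only [gromovProd, dist_comm (σ a) (σ 0), dist_comm (σ b) (σ 0), d1, d2, d3]
  ring

theorem lemFT {δ : ℝ} (hδ0 : 0 ≤ δ) (hhyp : GromovHyperbolicWith δ X)
    {σ₁ σ₂ : ℝ → X} {x : X} {m₁ m₂ : ℝ}
    (h₁ : IsGeodesicOn σ₁ (Icc 0 m₁)) (h₂ : IsGeodesicOn σ₂ (Icc 0 m₂))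
    (hx₁ : σ₁ 0 = x) (hx₂ : σ₂ 0 = x) (hm₁0 : 0 ≤ m₁) (hm₂0 : 0 ≤ m₂)
    {s : ℝ} (hs0 : 0 ≤ s) (hs : s ≤ gromovProd (σ₁ m₁) (σ₂ m₂) x) :
    dist (σ₁ s) (σ₂ s) ≤ 4 * δ := by
  have dm1 : dist (σ₁ m₁) x = m₁ := by
    rw [← hx₁, dist_comm]; simpa using geod_dist h₁ le_rfl hm₁0 le_rfl
  have dm2 : dist (σ₂ m₂) x = m₂ := by
    rw [← hx₂, dist_comm]; simpa using geod_dist h₂ le_rfl hm₂0 le_rfl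
  have hsm₁ : s ≤ m₁ := by have := gp_le_left (σ₁ m₁) (σ₂ m₂) x; linarith
  have hsm₂ : s ≤ m₂ := by have := gp_le_right (σ₁ m₁) (σ₂ m₂) x; linarith
  have g1 : gromovProd (σ₁ s) (σ₁ m₁) x = s := by
    rw [← hx₁]; exact gp_on_geod h₁ hs0 hsm₁ le_rfl
  have g2 : gromovProd (σ₂ s) (σ₂ m₂) x = s := by
    rw [← hx₂]; exact gp_on_geod h₂ hs0 hsm₂ le_rfl
  have g2' : gromovProd (σ₂ m₂) (σ₂ s) x = s := by rw [gp_comm]; exact g2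
  have hA := hhyp (σ₁ s) (σ₁ m₁) (σ₂ m₂) x
  have hB := hhyp (σ₁ s) (σ₂ m₂) (σ₂ s) x
  rw [g1] at hA
  rw [g2'] at hB
  have k1 : s ≤ min s (gromovProd (σ₁ m₁) (σ₂ m₂) x) := le_min le_rfl hs
  have k2 : s - δ ≤ gromovProd (σ₁ s) (σ₂ m₂) x := by linarith
  have k3 : s - δ ≤ min (gromovProd (σ₁ s) (σ₂ m₂) x) s := le_min k2 (by linarith)
  have k4 : s - 2*δ ≤ gromovProd (σ₁ s) (σ₂ s) x := by linarith
  have d1 : dist (σ₁ s) x = s := by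
    rw [← hx₁, dist_comm]; simpa using geod_dist h₁ le_rfl hs0 hsm₁
  have d2 : dist (σ₂ s) x = s := by
    rw [← hx₂, dist_comm]; simpa using geod_dist h₂ le_rfl hs0 hsm₂
  have hC : gromovProd (σ₁ s) (σ₂ s) x = (s + s - dist (σ₁ s) (σ₂ s))/2 := by
    simp only [gromovProd, d1, d2]
  linarith

theorem lemP {δ : ℝ} (hhyp : GromovHyperbolicWith δ X)
    {σ : ℝ → X} {x q : X} {m : ℝ} (h : IsGeodesicOn σ (Icc 0 m)) (hm0 : 0 ≤ m)
    (h0 : σ 0 = x) (hm : σ m = q) (w : X) :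
    dist w (σ (gromovProd q w x)) ≤ gromovProd x q w + 2 * δ := by
  set s := gromovProd q w x with hsdef
  have hs0 : 0 ≤ s := gp_nonneg _ _ _
  have dqx : dist q x = m := by
    rw [← h0, ← hm, dist_comm]; simpa using geod_dist h le_rfl hm0 le_rfl
  have hsm : s ≤ m := by have := gp_le_left q w x; rw [dqx] at this; linarith
  have d1 : dist (σ s) x = s := by
    rw [← h0, dist_comm]; simpa using geod_dist h le_rfl hs0 hsm
  have d2 : dist (σ s) q = m - s := by rw [← hm]; exact geod_dist h hs0 hsm le_rfl
  have gq : gromovProd q (σ s) x = s := by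
    simp only [gromovProd, dqx, d1, dist_comm q (σ s), d2]; ring
  have hA := hhyp w q (σ s) x
  have e1 : gromovProd w q x = s := by rw [gp_comm]
  rw [e1, gq] at hA
  have k1 : s - δ ≤ gromovProd w (σ s) x := by
    have : s ≤ min s s := le_min le_rfl le_rfl
    linarith
  have hD : gromovProd w (σ s) x = (dist w x + s - dist w (σ s))/2 := by
    simp only [gromovProd, d1]
  have hE : gromovProd x q w = (dist x w + dist q w - m)/2 := by
    simp only [gromovProd, dist_comm x q, dqx]
  have hs_eq : s = (m + dist w x - dist q w)/2 := by
    simp only [hsdef, gromovProd, dqx, dist_comm w x]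
  have hcm : dist x w = dist w x := dist_comm x w
  linarith





theorem orbit_closed [IsIsometricSMul Γ X] [ProperSpace X]
    (hact : ProperAction Γ X) {k' : Set X} (hk' : IsCompact k') :
    IsClosed (⋃ g : Γ, g • k') := by
  refine IsSeqClosed.isClosed ?_
  intro u v hu hv
  have hev : ∀ᶠ n in Filter.atTop, u n ∈ closedBall v 1 :=
    hv (Metric.closedBall_mem_nhds v one_pos)
  set E : Set X := k' ∪ closedBall v 1 with hE
  have hEc : IsCompact E := hk'.union (isCompact_closedBall v 1)
  have hF : {g : Γ | ∃ x ∈ E, g • x ∈ E}.Finite := hact E hEc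
  have hCc : IsCompact (⋃ g ∈ {g : Γ | ∃ x ∈ E, g • x ∈ E}, g • k') := by
    refine hF.isCompact_biUnion (fun g _ => ?_)
    have : IsCompact ((fun z => g • z) '' k') := hk'.image (continuous_const_smul g)
    simpa using this
  have hsub : ∀ᶠ n in Filter.atTop, u n ∈ ⋃ g ∈ {g : Γ | ∃ x ∈ E, g • x ∈ E}, g • k' := by
    filter_upwards [hev] with n hn
    rcases Set.mem_iUnion.1 (hu n) with ⟨g, hg⟩
    rcases Set.mem_smul_set.1 hg with ⟨z, hz, hgz⟩
    refine Set.mem_biUnion ⟨z, Set.mem_union_left _ hz, ?_⟩ hg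
    rw [hgz]; exact Set.mem_union_right _ hn
  have hvC := hCc.isClosed.mem_of_tendsto hv hsub
  rcases Set.mem_iUnion₂.1 hvC with ⟨g, _, hgv⟩
  exact Set.mem_iUnion.2 ⟨g, hgv⟩

theorem thick_compact [ProperSpace X] {k : Set X} (hk : IsCompact k) {o : X} (hok : o ∈ k)
    {Dk r : ℝ} (hDk : ∀ a ∈ k, ∀ b ∈ k, dist a b ≤ Dk) (hr : 0 ≤ r) :
    IsCompact {v : X | ∃ w ∈ k, dist v w ≤ r} := by
  have hsub : {v : X | ∃ w ∈ k, dist v w ≤ r} ⊆ closedBall o (Dk + r) := by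
    rintro v ⟨w, hw, hvw⟩
    have h1 := hDk w hw o hok
    have h2 := dist_triangle v w o
    exact Metric.mem_closedBall.2 (by linarith)
  have hcl : IsClosed {v : X | ∃ w ∈ k, dist v w ≤ r} := by
    refine IsSeqClosed.isClosed ?_
    intro u v hu hv
    choose w hw hdw using hu
    obtain ⟨z, hz, φ, hφmono, hφ⟩ := hk.tendsto_subseq hw
    refine ⟨z, hz, ?_⟩
    have h1 : Tendsto (fun n => dist (u (φ n)) (w (φ n))) atTop (𝓝 (dist v z)) :=
      Tendsto.dist (hv.comp hφmono.tendsto_atTop) hφ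
    exact le_of_tendsto h1 (Filter.Eventually.of_forall fun n => hdw (φ n))
  exact (isCompact_closedBall o (Dk + r)).of_isClosed_subset hcl hsub

theorem one_mem_gammaK {k : Set X} {o : X} (hok : o ∈ k) :
    (1 : Γ) ∈ gammaK Γ k := by
  refine ⟨o, hok, o, hok, fun _ => o, rfl, (one_smul Γ o).symm, ?_, ?_⟩
  · intro s hs t ht
    simp only [one_smul, dist_self] at hs ht
    have hs0 : s = 0 := le_antisymm hs.2 hs.1
    have ht0 : t = 0 := le_antisymm ht.2 ht.1
    simp [hs0, ht0]
  · intro v hv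
    rcases hv.1 with ⟨t, _, rfl⟩
    exact Set.mem_union_left _ hok

def propSet (Γ : Type) [Group Γ] [MulAction Γ X] (E : Set X) : Set Γ :=
  {g : Γ | ∃ v ∈ E, g • v ∈ E}

def bigE (o : X) (k : Set X) (δ Dk : ℝ) : Set X := k ∪ closedBall o (46 * δ + 2 * Dk)





theorem core {X : Type} [MetricSpace X] [ProperSpace X]
    {Γ : Type} [Group Γ] [MulAction Γ X] [IsIsometricSMul Γ X]
    {δ : ℝ} (hδ : 0 < δ) (hhyp : GromovHyperbolicWith δ X) (hgeo : GeodesicSpace X)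
    (hact : ProperAction Γ X) (o : X)
    {k : Set X} (hk : IsCompact k) (hok : o ∈ k)
    {Dk : ℝ} (hDk0 : 0 ≤ Dk) (hDk : ∀ a ∈ k, ∀ b ∈ k, dist a b ≤ Dk)
    {K : Set X} (hKdef : K = {z : X | ∃ w ∈ k, dist z w ≤ 6 * δ})
    {x : X} (hx : x ∈ K) {c : ℝ → X} {I : Set ℝ}
    (hc0 : c 0 = x) (hgeod : IsGeodesicOn c I)
    (hcK : (c '' I) ∩ (⋃ g : Γ, g • K) ⊆ K)
    (γ : Γ) {L : ℝ} (hL0 : 0 ≤ L) (hLd : L ≤ dist x (γ • o))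
    (hex : ∃ n : ℝ, 0 ≤ n ∧ Icc 0 n ⊆ I ∧ L - 1 ≤ gromovProd (c n) (γ • o) x) :
    ∃ (β : Γ) (q : X),
      (∃ s ∈ propSet Γ (bigE o k δ Dk), ∃ g ∈ gammaK Γ k, β = s * g) ∧
      gromovProd x (γ • o) q = 0 ∧
      dist q (β • o) ≤ 25 * δ + Dk ∧
      L ≤ dist x q + 11 * δ + 1 ∧
      (∀ n : ℝ, 0 ≤ n → Icc 0 n ⊆ I → gromovProd (c n) (γ • o) x ≤ L + 1 →
        gromovProd (c n) (γ • o) q ≤ 14 * δ + 2) := by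
  have hδ0 : (0:ℝ) ≤ δ := le_of_lt hδ
  obtain ⟨x₀, hx₀k, hxx₀⟩ : ∃ w ∈ k, dist x w ≤ 6 * δ := by rw [hKdef] at hx; exact hx
  set y : X := γ • o with hy
  set d : ℝ := dist x y with hd
  have hd0 : 0 ≤ d := dist_nonneg
  obtain ⟨σ, hσ0, hσd, hσg⟩ := hgeo x y
  -- thickened compact set kp
  set kp : Set X := {v : X | ∃ w ∈ k, dist v w ≤ 4 * δ} with hkp
  have hkpc : IsCompact kp := thick_compact hk hok hDk (by linarith)
  have hokp : o ∈ kp := ⟨o, hok, by simp [dist_self]; linarith⟩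
  set U : Set X := ⋃ g : Γ, g • k with hU
  set Up : Set X := ⋃ g : Γ, g • kp with hUp
  have hUclosed : IsClosed U := orbit_closed hact hk
  have hUpclosed : IsClosed Up := orbit_closed hact hkpc
  set L0 : ℝ := max 0 (L - 1 - 10 * δ) with hL0def
  have hL0d : L0 ≤ d := max_le hd0 (by linarith)
  have hL00 : 0 ≤ L0 := le_max_left _ _
  set A : Set ℝ := {t | t ∈ Icc L0 d ∧ σ t ∈ Up} with hA
  have hσcont : ContinuousOn σ (Icc 0 d) := geod_continuousOn hσg
  have hAclosed : IsClosed A := by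
    have h1 : IsClosed (Icc L0 d ∩ σ ⁻¹' Up) :=
      (hσcont.mono (Icc_subset_Icc hL00 le_rfl)).preimage_isClosed_of_isClosed
        isClosed_Icc hUpclosed
    exact h1
  have hdA : d ∈ A := ⟨⟨hL0d, le_rfl⟩, by
    rw [hσd]
    exact Set.mem_iUnion.2 ⟨γ, Set.smul_mem_smul_set hokp⟩⟩
  have hAbdd : BddBelow A := ⟨L0, fun t ht => ht.1.1⟩
  set t₁ : ℝ := sInf A with ht₁def
  have ht₁A : t₁ ∈ A := hAclosed.csInf_mem ⟨d, hdA⟩ hAbdd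
  have ht₁min : ∀ t ∈ A, t₁ ≤ t := fun t ht => csInf_le hAbdd ht
  obtain ⟨⟨ht₁L0, ht₁d⟩, hqUp⟩ := ht₁A
  have ht₁0 : 0 ≤ t₁ := le_trans hL00 ht₁L0
  set q : X := σ t₁ with hq
  obtain ⟨α, hα⟩ := Set.mem_iUnion.1 hqUp
  obtain ⟨z', hz'kp, hz'q⟩ := Set.mem_smul_set.1 hα
  obtain ⟨z, hzk, hz'z⟩ := hz'kp
  have hqz : dist q (α • z) ≤ 4 * δ := by
    rw [← hz'q, dist_smul]; exact hz'z
  -- basic geodesic facts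
  have hdxq : dist x q = t₁ := by
    rw [← hσ0, hq]; simpa using geod_dist hσg le_rfl ht₁0 ht₁d
  have hdqy : dist q y = d - t₁ := by
    rw [← hσd, hq]; exact geod_dist hσg ht₁0 ht₁d le_rfl
  have hgpxyq : gromovProd x y q = 0 := by
    simp only [gromovProd, hdxq, dist_comm y q, hdqy, ← hd]
    ring
  have hLbound : L ≤ dist x q + 11 * δ + 1 := by
    have h1 : L - 1 - 10 * δ ≤ L0 := le_max_right _ _
    rw [hdxq]; linarith
  have hcbound : ∀ n : ℝ, 0 ≤ n → Icc 0 n ⊆ I → gromovProd (c n) y x ≤ L + 1 →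
      gromovProd (c n) y q ≤ 14 * δ + 2 := by
    intro n hn0 hnI hLn
    set Ln : ℝ := gromovProd (c n) y x with hLn_def
    have hLn0 : 0 ≤ Ln := gp_nonneg _ _ _
    set s : ℝ := min t₁ Ln with hs
    have hs0 : 0 ≤ s := le_min ht₁0 hLn0
    have hsLn : s ≤ Ln := min_le_right _ _
    have hst₁ : s ≤ t₁ := min_le_left _ _
    have hcgeod : IsGeodesicOn c (Icc 0 n) := fun a ha b hb => hgeod a (hnI ha) b (hnI hb)
    have hcn : dist x (c n) = n := by
      rw [← hc0]; simpa using geod_dist hcgeod le_rfl hn0 le_rfl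
    have hsn : s ≤ n := by
      have h1 := gp_le_left (c n) y x
      rw [dist_comm, hcn] at h1; linarith
    have hFT : dist (c s) (σ s) ≤ 4 * δ := by
      refine lemFT hδ0 hhyp hcgeod hσg hc0 hσ0 hn0 hd0 hs0 ?_
      rw [hσd]; exact hsLn
    have hdcs : dist (c s) (c n) = n - s := geod_dist hcgeod hs0 hsn le_rfl
    have hdσs : dist (σ s) q = t₁ - s := by rw [hq]; exact geod_dist hσg hs0 hst₁ ht₁d
    have hdcnq : dist (c n) q ≤ (n - s) + 4 * δ + (t₁ - s) := by
      have h1 := dist_triangle (c n) (c s) q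
      have h2 := dist_triangle (c s) (σ s) q
      have h3 : dist (c n) (c s) = n - s := by rw [dist_comm]; exact hdcs
      linarith
    have hdcny : dist (c n) y = n + d - 2 * Ln := by
      have f0 : Ln = (dist (c n) x + dist y x - dist (c n) y)/2 := rfl
      have f1 : dist (c n) x = n := by rw [dist_comm]; exact hcn
      have f2 : dist y x = d := by rw [dist_comm, ← hd]
      rw [f1, f2] at f0; linarith
    have hgpq : gromovProd (c n) y q = (dist (c n) q + dist y q - dist (c n) y)/2 := rfl
    have hyq : dist y q = d - t₁ := by rw [dist_comm]; exact hdqy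
    rcases min_cases t₁ Ln with ⟨he, hc1⟩ | ⟨he, hc1⟩
    · -- s = t₁, t₁ ≤ Ln
      rw [hgpq, hyq, hdcny]
      have h1 : L - 1 - 10*δ ≤ L0 := le_max_right _ _
      rw [← hs] at *
      linarith
    · rw [hgpq, hyq, hdcny]
      rw [← hs] at *
      linarith
  have hqo_base : dist q (α • o) ≤ 4 * δ + Dk := by
    have h1 : dist (α • z) (α • o) = dist z o := dist_smul _ _ _
    have h2 := hDk z hzk o hok
    have h3 := dist_triangle q (α • z) (α • o)
    rw [h1] at h3; linarith
  set q' : X := α • z with hq'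
  set T : ℝ := dist x₀ q' with hT
  have hT0 : 0 ≤ T := dist_nonneg
  obtain ⟨τ, hτ0, hτT, hτg⟩ := hgeo x₀ q'
  have hTle : T ≤ t₁ + 10 * δ := by
    have h1 := dist_triangle x₀ x q'
    have h2 := dist_triangle x q q'
    have h3 : dist x₀ x = dist x x₀ := dist_comm _ _
    rw [← hdxq]; rw [hT] at *; linarith
  have ht₁T : t₁ ≤ T + 10 * δ := by
    have h1 := dist_triangle x q' q
    have h2 := dist_triangle x x₀ q'
    have h3 : dist q' q = dist q q' := dist_comm _ _
    rw [← hdxq] at *; rw [hT] at *; linarith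
  by_cases hdeg : T < 45 * δ + Dk
  · -- degenerate case: α itself is bounded
    refine ⟨α, q, ⟨α, ?_, 1, one_mem_gammaK hok, (mul_one α).symm⟩, hgpxyq, ?_, hLbound, hcbound⟩
    · refine ⟨z, Set.mem_union_left _ hzk, Set.mem_union_right _ (Metric.mem_closedBall.2 ?_)⟩
      have h1 := dist_triangle (α • z) x₀ o
      have h2 := hDk x₀ hx₀k o hok
      have h3 : dist (α • z) x₀ = T := by rw [hT, ← hq', dist_comm]
      linarith
    · linarith
  · push_neg at hdeg
    obtain ⟨n, hn0, hnI, hnL⟩ := hex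
    set Ln : ℝ := gromovProd (c n) y x with hLn_def
    have hcgeod : IsGeodesicOn c (Icc 0 n) := fun a ha b hb => hgeod a (hnI ha) b (hnI hb)
    have hcn : dist x (c n) = n := by
      rw [← hc0]; simpa using geod_dist hcgeod le_rfl hn0 le_rfl
    have hLnn : Ln ≤ n := by
      have h1 := gp_le_left (c n) y x
      rw [dist_comm, hcn] at h1; linarith
    -- the exclusion statement
    have hexc : ∀ r : ℝ, 0 ≤ r → r ≤ T → τ r ∈ U → r ≤ 24 * δ + Dk ∨ T - 21 * δ ≤ r := by
      intro r hr0 hrT hrU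
      by_contra hcon
      push_neg at hcon
      obtain ⟨hR2, hR3⟩ := hcon
      set w : X := τ r with hw
      obtain ⟨g'', hg''⟩ := Set.mem_iUnion.1 hrU
      obtain ⟨w', hw'k, hw'w⟩ := Set.mem_smul_set.1 hg''
      have hdx₀w : dist x₀ w = r := by
        rw [hw, ← hτ0]; simpa using geod_dist hτg le_rfl hr0 hrT
      have hdwq' : dist w q' = T - r := by
        rw [hw, ← hτT]; exact geod_dist hτg hr0 hrT le_rfl
      have hgp0 : gromovProd x₀ q' w = 0 := by
        simp only [gromovProd, hdx₀w, dist_comm q' w, hdwq', ← hT]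
        ring
      -- step 1 : ⟨x,q⟩_w ≤ 2δ
      have hxqw : gromovProd x q w ≤ 2 * δ := by
        by_contra hcon2
        push_neg at hcon2
        have hA := hhyp x₀ x q' w
        have hB := hhyp x q q' w
        have hqq'w : (T - r) - 4*δ ≤ gromovProd q q' w := by
          have h1 : dist q w ≥ dist q' w - dist q q' := by
            have := dist_triangle q' q w
            have e := dist_comm q' q
            linarith
          have h2 : dist q' w = T - r := by rw [dist_comm]; exact hdwq'
          simp only [gromovProd]
          have h3 : dist q q' ≤ 4*δ := hqz
          linarith
        have hx₀xw : r - 6*δ ≤ gromovProd x₀ x w := by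
          have h1 : dist x w ≥ dist x₀ w - dist x₀ x := by
            have := dist_triangle x₀ x w; linarith
          have h2 : dist x₀ x ≤ 6 * δ := by rw [dist_comm]; exact hxx₀
          simp only [gromovProd]; linarith
        have k1 : 2*δ < min (gromovProd x q w) (gromovProd q q' w) :=
          lt_min hcon2 (by linarith)
        have k2 : δ < gromovProd x q' w := by linarith
        have k3 : δ < min (gromovProd x₀ x w) (gromovProd x q' w) :=
          lt_min (by linarith) k2
        rw [hgp0] at hA
        linarith
      set s : ℝ := gromovProd q w x with hsdef
      have hs0 : 0 ≤ s := gp_nonneg _ _ _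
      have hst₁ : s ≤ t₁ := by
        have := gp_le_left q w x
        rw [dist_comm, hdxq] at this; linarith
      have hσres : IsGeodesicOn σ (Icc 0 t₁) :=
        fun a ha b hb => hσg a ⟨ha.1, ha.2.trans ht₁d⟩ b ⟨hb.1, hb.2.trans ht₁d⟩
      have hproj : dist w (σ s) ≤ 4 * δ := by
        have := lemP hhyp hσres ht₁0 hσ0 hq.symm w
        rw [← hsdef] at this
        linarith
      rcases le_or_gt L0 s with hsL0 | hsL0
      · -- s lands in the minimality region
        have hσsUp : σ s ∈ Up := by
          refine Set.mem_iUnion.2 ⟨g'', (mem_smul_set_iff_inv_smul_mem).2 ?_⟩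
          refine ⟨w', hw'k, ?_⟩
          have h1 : dist (g''⁻¹ • σ s) w' = dist (σ s) w := by
            rw [← hw'w, ← dist_smul g'' (g''⁻¹ • σ s) w', smul_inv_smul]
          rw [h1, dist_comm]
          linarith
        have hsA : s ∈ A := ⟨⟨hsL0, hst₁.trans ht₁d⟩, hσsUp⟩
        have h1 : t₁ ≤ s := ht₁min s hsA
        have hst : s = t₁ := le_antisymm hst₁ h1
        have h2 : dist w q ≤ 4*δ := by rw [hq, ← hst]; exact hproj
        have h3 := dist_triangle w q q'
        linarith
      · have hL0pos : 0 < L0 := lt_of_le_of_lt hs0 hsL0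
        have hL0eq : L0 = L - 1 - 10 * δ := by
          rcases max_choice 0 (L - 1 - 10*δ) with h | h
          · rw [hL0def] at *; linarith
          · rw [hL0def] at *; linarith
        have hsLn10 : s + 10 * δ < Ln := by
          rw [hL0eq] at hsL0; linarith
        have hdσsq : dist (σ s) q = t₁ - s := by
          rw [hq]; exact geod_dist hσg hs0 hst₁ ht₁d
        rcases le_or_gt (t₁ - s) (12 * δ) with ht12 | ht12
        · have h1 := dist_triangle w (σ s) q
          have h2 := dist_triangle w q q'
          linarith
        · -- main sub-case
          have hsn : s ≤ n := by linarith
          have hFTs : dist (c s) (σ s) ≤ 4 * δ := by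
            refine lemFT hδ0 hhyp hcgeod hσg hc0 hσ0 hn0 hd0 hs0 ?_
            rw [hσd]; linarith
          have hdσsy : dist (σ s) y = d - s := by
            rw [← hσd]; exact geod_dist hσg hs0 (hst₁.trans ht₁d) le_rfl
          have hdcny : dist (c n) y = n + d - 2 * Ln := by
            have f0 : Ln = (dist (c n) x + dist y x - dist (c n) y)/2 := rfl
            have f1 : dist (c n) x = n := by rw [dist_comm]; exact hcn
            have f2 : dist y x = d := by rw [dist_comm, ← hd]
            rw [f1, f2] at f0; linarith
          have hyq'w : t₁ - s - 8 * δ ≤ gromovProd y q' w := by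
            have e1 : gromovProd y q (σ s) = t₁ - s := by
              simp only [gromovProd, dist_comm y (σ s), hdσsy, dist_comm q (σ s), hdσsq,
                dist_comm y q, hdqy]
              ring
            have e2 := gromovProd_ge y q (σ s) w
            have e3 := gp_move2 y q q' w
            have e4 : dist (σ s) w = dist w (σ s) := dist_comm _ _
            rw [e1] at e2
            linarith
          have hcnyw : Ln - s - 6 * δ ≤ gromovProd (c n) y w := by
            have f2 : dist (c n) (σ s) ≥ n - s - 4*δ := by
              have g1 : dist (c s) (c n) = n - s := geod_dist hcgeod hs0 hsn le_rfl
              have g2 := dist_triangle (c n) (σ s) (c s)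
              have g3 : dist (c n) (c s) = n - s := by rw [dist_comm]; exact g1
              have g4 : dist (σ s) (c s) = dist (c s) (σ s) := dist_comm _ _
              linarith
            have e1 : Ln - s - 2*δ ≤ gromovProd (c n) y (σ s) := by
              simp only [gromovProd, dist_comm y (σ s), hdσsy, hdcny]
              linarith
            have e2 := gromovProd_ge (c n) y (σ s) w
            have e4 : dist (σ s) w = dist w (σ s) := dist_comm _ _
            linarith
          have hx₀xw : r - 6*δ ≤ gromovProd x₀ x w := by
            have h1 : dist x w ≥ dist x₀ w - dist x₀ x := by
              have := dist_triangle x₀ x w; linarith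
            have h2 : dist x₀ x ≤ 6 * δ := by rw [dist_comm]; exact hxx₀
            simp only [gromovProd]; linarith
          have hxcnw : gromovProd x (c n) w ≤ 3 * δ := by
            by_contra hcon3
            push_neg at hcon3
            have hA := hhyp x₀ x q' w
            have hB := hhyp x (c n) q' w
            have hC := hhyp (c n) y q' w
            have k1 : 3*δ < min (gromovProd (c n) y w) (gromovProd y q' w) :=
              lt_min (by linarith) (by linarith)
            have k2 : 2*δ < gromovProd (c n) q' w := by linarith
            have k3 : 2*δ < min (gromovProd x (c n) w) (gromovProd (c n) q' w) :=
              lt_min (by linarith) k2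
            have k4 : δ < gromovProd x q' w := by linarith
            have k5 : δ < min (gromovProd x₀ x w) (gromovProd x q' w) :=
              lt_min (by linarith) k4
            rw [hgp0] at hA
            linarith
          set s' : ℝ := gromovProd (c n) w x with hs'def
          have hs'0 : 0 ≤ s' := gp_nonneg _ _ _
          have hs'n : s' ≤ n := by
            have h1 := gp_le_left (c n) w x
            rw [dist_comm, hcn] at h1; linarith
          have hprojc : dist w (c s') ≤ 5*δ := by
            have := lemP hhyp hcgeod hn0 hc0 rfl w
            rw [← hs'def] at this
            linarith
          have hcs'K : c s' ∈ (⋃ g : Γ, g • K) := by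
            refine Set.mem_iUnion.2 ⟨g'', (mem_smul_set_iff_inv_smul_mem).2 ?_⟩
            rw [hKdef]
            refine ⟨w', hw'k, ?_⟩
            have h1 : dist (g''⁻¹ • c s') w' = dist (c s') w := by
              rw [← hw'w, ← dist_smul g'' (g''⁻¹ • c s') w', smul_inv_smul]
            rw [h1, dist_comm]
            linarith
          have hcs'mem : c s' ∈ K := hcK ⟨Set.mem_image_of_mem c (hnI ⟨hs'0, hs'n⟩), hcs'K⟩
          obtain ⟨w'', hw''k, hcs'w''⟩ : ∃ ww ∈ k, dist (c s') ww ≤ 6*δ := by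
            rw [hKdef] at hcs'mem; exact hcs'mem
          have hfin1 := dist_triangle w (c s') w''
          have hfin2 := dist_triangle w w'' x₀
          have hfin3 := hDk w'' hw''k x₀ hx₀k
          have hfin4 : dist w x₀ = r := by rw [dist_comm]; exact hdx₀w
          linarith
    -- now build t₂, t₃ and the gammaK element
    have hτcont : ContinuousOn τ (Icc 0 T) := geod_continuousOn hτg
    set Aτ : Set ℝ := {r : ℝ | r ∈ Icc (0:ℝ) (24*δ + Dk) ∧ τ r ∈ U} with hAτ
    have hR2T : 24 * δ + Dk ≤ T := by linarith
    have hAτclosed : IsClosed Aτ := by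
      have h1 : IsClosed (Icc (0:ℝ) (24*δ + Dk) ∩ τ ⁻¹' U) :=
        (hτcont.mono (Icc_subset_Icc le_rfl hR2T)).preimage_isClosed_of_isClosed
          isClosed_Icc hUclosed
      exact h1
    have h0Aτ : (0:ℝ) ∈ Aτ := by
      refine ⟨⟨le_rfl, by linarith⟩, ?_⟩
      rw [hτ0]
      exact Set.mem_iUnion.2 ⟨1, Set.mem_smul_set.2 ⟨x₀, hx₀k, one_smul _ _⟩⟩
    set t₂ : ℝ := sSup Aτ with ht₂def
    have hAτbdd : BddAbove Aτ := ⟨24*δ + Dk, fun r hr => hr.1.2⟩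
    have ht₂mem : t₂ ∈ Aτ := hAτclosed.csSup_mem ⟨0, h0Aτ⟩ hAτbdd
    have ht₂max : ∀ r ∈ Aτ, r ≤ t₂ := fun r hr => le_csSup hAτbdd hr
    set Bτ : Set ℝ := {r : ℝ | r ∈ Icc (T - 21*δ) T ∧ τ r ∈ U} with hBτ
    have hBτ0 : (0:ℝ) ≤ T - 21*δ := by linarith
    have hBτclosed : IsClosed Bτ := by
      have h1 : IsClosed (Icc (T - 21*δ) T ∩ τ ⁻¹' U) :=
        (hτcont.mono (Icc_subset_Icc hBτ0 le_rfl)).preimage_isClosed_of_isClosed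
          isClosed_Icc hUclosed
      exact h1
    have hTBτ : T ∈ Bτ := by
      refine ⟨⟨by linarith, le_rfl⟩, ?_⟩
      rw [hτT, hq']
      exact Set.mem_iUnion.2 ⟨α, Set.smul_mem_smul_set hzk⟩
    set t₃ : ℝ := sInf Bτ with ht₃def
    have hBτbdd : BddBelow Bτ := ⟨T - 21*δ, fun r hr => hr.1.1⟩
    have ht₃mem : t₃ ∈ Bτ := hBτclosed.csInf_mem ⟨T, hTBτ⟩ hBτbdd
    have ht₃min : ∀ r ∈ Bτ, t₃ ≤ r := fun r hr => csInf_le hBτbdd hr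
    have ht₂0 : 0 ≤ t₂ := ht₂mem.1.1
    have ht₂R2 : t₂ ≤ 24*δ + Dk := ht₂mem.1.2
    have ht₃T : t₃ ≤ T := ht₃mem.1.2
    have ht₃lb : T - 21*δ ≤ t₃ := ht₃mem.1.1
    have ht₂₃ : t₂ ≤ t₃ := by linarith
    obtain ⟨s₁, hs₁⟩ := Set.mem_iUnion.1 ht₂mem.2
    obtain ⟨y₁, hy₁k, hy₁⟩ := Set.mem_smul_set.1 hs₁
    obtain ⟨α₁, hα₁⟩ := Set.mem_iUnion.1 ht₃mem.2
    obtain ⟨y₂, hy₂k, hy₂⟩ := Set.mem_smul_set.1 hα₁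
    set g₀ : Γ := s₁⁻¹ * α₁ with hg₀
    have hgy₂ : g₀ • y₂ = s₁⁻¹ • τ t₃ := by rw [hg₀, mul_smul, hy₂]
    have hy₁' : y₁ = s₁⁻¹ • τ t₂ := by rw [← hy₁, inv_smul_smul]
    set c' : ℝ → X := fun r => s₁⁻¹ • τ (t₂ + r) with hc'
    have hc'0 : c' 0 = y₁ := by rw [hc']; simp only [add_zero]; rw [← hy₁, inv_smul_smul]
    set D' : ℝ := t₃ - t₂ with hD'
    have hD'0 : 0 ≤ D' := by linarith
    have ht₂₃' : t₂ + D' = t₃ := by rw [hD']; ring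
    have hc'D : c' D' = g₀ • y₂ := by rw [hc', hgy₂]; simp only [ht₂₃']
    have hdist12 : dist y₁ (g₀ • y₂) = D' := by
      rw [hy₁', hgy₂, dist_smul]
      exact geod_dist hτg ht₂0 ht₂₃ ht₃T
    have hg₀mem : g₀ ∈ gammaK Γ k := by
      refine ⟨y₁, hy₁k, y₂, hy₂k, c', hc'0, ?_, ?_, ?_⟩
      · rw [hdist12]; exact hc'D
      · rw [hdist12]
        intro a ha b hb
        rw [hc']
        simp only
        rw [dist_smul]
        rw [hτg (t₂+a) ⟨by linarith [ha.1], by linarith [ha.2, ht₃T]⟩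
            (t₂+b) ⟨by linarith [hb.1], by linarith [hb.2, ht₃T]⟩]
        congr 1
        ring
      · rw [hdist12]
        rintro v ⟨⟨a, ha, rfl⟩, hvU'⟩
        obtain ⟨h'', hh''⟩ := Set.mem_iUnion.1 hvU'
        have hτrU : τ (t₂ + a) ∈ U := by
          have e1 : τ (t₂ + a) = s₁ • (c' a) := by rw [hc']; simp only; rw [smul_inv_smul]
          rw [e1]
          refine Set.mem_iUnion.2 ⟨s₁ * h'', ?_⟩
          rw [mul_smul]
          exact Set.smul_mem_smul_set hh''
        have hr0 : 0 ≤ t₂ + a := by linarith [ha.1]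
        have hrT : t₂ + a ≤ T := by linarith [ha.2, ht₃T]
        rcases hexc (t₂ + a) hr0 hrT hτrU with hc1 | hc2
        · have h1 : t₂ + a ≤ t₂ := ht₂max (t₂+a) ⟨⟨hr0, hc1⟩, hτrU⟩
          have ha0 : a = 0 := by linarith [ha.1]
          rw [ha0, hc'0]
          exact Set.mem_union_left _ hy₁k
        · have h1 : t₃ ≤ t₂ + a := ht₃min (t₂+a) ⟨⟨hc2, hrT⟩, hτrU⟩
          have haD : a = D' := by linarith [ha.2]
          rw [haD, hc'D]
          exact Set.mem_union_right _ (Set.smul_mem_smul_set hy₂k)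
    have hs₁S : s₁ ∈ propSet Γ (bigE o k δ Dk) := by
      refine ⟨y₁, Set.mem_union_left _ hy₁k, Set.mem_union_right _ (Metric.mem_closedBall.2 ?_)⟩
      rw [hy₁]
      have h1 : dist (τ t₂) x₀ = t₂ := by
        rw [← hτ0, dist_comm]; simpa using geod_dist hτg le_rfl ht₂0 (ht₂₃.trans ht₃T)
      have h2 := hDk x₀ hx₀k o hok
      have h3 := dist_triangle (τ t₂) x₀ o
      linarith
    refine ⟨α₁, q, ⟨s₁, hs₁S, g₀, hg₀mem, by rw [hg₀, ← mul_assoc, mul_inv_cancel, one_mul]⟩,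
      hgpxyq, ?_, hLbound, hcbound⟩
    -- dist q (α₁ • o) ≤ 25δ + Dk
    have e3 : dist (τ t₃) q' = T - t₃ := by
      rw [← hτT]; exact geod_dist hτg (ht₂0.trans ht₂₃) ht₃T le_rfl
    have e4 : dist (τ t₃) (α₁ • o) = dist y₂ o := by rw [← hy₂, dist_smul]
    have e5 := hDk y₂ hy₂k o hok
    have h1 := dist_triangle q q' (α₁ • o)
    have h2 := dist_triangle q' (τ t₃) (α₁ • o)
    have h3 : dist q' (τ t₃) = T - t₃ := by rw [dist_comm]; exact e3
    rw [e4] at h2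
    linarith



theorem gpPB_le {o base xx : X} {ξ : GromovBoundary o} (u : {u : ℕ → X // SeqToInf o u})
    (hmk : mkBoundary o u = ξ) {b : ℝ}
    (hb : Filter.liminf (fun n => gromovProd xx (u.1 n) base) Filter.atTop ≤ b) :
    gpPB o base xx ξ ≤ b := by
  refine le_trans (csInf_le ⟨0, ?_⟩ ⟨u, hmk, rfl⟩) hb
  rintro t ⟨v, hv, rfl⟩
  exact le_myliminf (M := dist xx base) (fun n => gp_le_left _ _ _)
    (Filter.Eventually.of_forall fun n => gp_nonneg _ _ _)


end ThickeningAux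

/-- thickening lemma. Let `X` be a proper geodesic `δ`-hyperbolic
space, `Γ` a group acting properly by isometries on `X` with basepoint `o`,
`k ⊆ X` a compact set containing `o`, and `K` the closed `6δ`-neighbourhood of
`k`. Then there exist a finite subset `S ⊆ Γ` and `r₀ > 0` such that: for every
`x ∈ K`, every `y ∈ X ∪ ∂X`, every geodesic `c` from `x` to `y` with
`c ∩ Γ·K ⊆ K`, and every `γ ∈ Γ`, there exists `β ∈ S·Γ_k` with
`⟨x,γo⟩_{βo} ≤ r₀`, `⟨y,γo⟩_{βo} ≤ r₀` and `d(x,βo) ≥ ⟨y,γo⟩_x - r₀`. -/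
theorem thickening_lemma
    {X : Type} [MetricSpace X] [ProperSpace X]
    {Γ : Type} [Group Γ] [MulAction Γ X] [IsIsometricSMul Γ X]
    (δ : ℝ) (hδ : 0 < δ) (hhyp : GromovHyperbolicWith δ X) (hgeo : GeodesicSpace X)
    (hact : ProperAction Γ X) (o : X)
    (k : Set X) (hk : IsCompact k) (hok : o ∈ k)
    (K : Set X) (hKdef : K = {z : X | ∃ w ∈ k, dist z w ≤ 6 * δ}) :
    ∃ (S : Finset Γ) (r₀ : ℝ), 0 < r₀ ∧
      ∀ x ∈ K, ∀ (p : Bord o) (c : ℝ → X) (I : Set ℝ),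
        JoinsBord o c I x p →
        ((c '' I) ∩ (⋃ g : Γ, g • K) ⊆ K) →
        ∀ γ : Γ, ∃ β : Γ,
          (∃ s ∈ S, ∃ g ∈ gammaK Γ k, β = s * g) ∧
          gromovProd x (γ • o) (β • o) ≤ r₀ ∧
          gpE o (β • o) p (Bord.ofX o (γ • o)) ≤ (r₀ : EReal) ∧
          gpE o x p (Bord.ofX o (γ • o)) ≤ ((dist x (β • o) + r₀ : ℝ) : EReal) := by
  classical
  obtain ⟨Dk₀, hDk₀⟩ := Metric.isBounded_iff.1 hk.isBounded
  set Dk : ℝ := max Dk₀ 0 with hDkdef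
  have hDk0 : 0 ≤ Dk := le_max_right _ _
  have hDk : ∀ a ∈ k, ∀ b ∈ k, dist a b ≤ Dk := fun a ha b hb =>
    le_trans (hDk₀ ha hb) (le_max_left _ _)
  have hSfin : (propSet Γ (bigE o k δ Dk)).Finite := by
    have hEc : IsCompact (bigE o k δ Dk) := hk.union (isCompact_closedBall _ _)
    exact hact _ hEc
  refine ⟨hSfin.toFinset, 40*δ + Dk + 2, by linarith, ?_⟩
  intro x hx p c I hjoin hcK γ
  rcases hjoin with ⟨y, rfl, hIeq, hc0, hcy, hgeod⟩ | ⟨ξ, rfl, hIeq, hc0, hray, hends⟩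
  · -- point case
    subst hIeq
    have hL0 : 0 ≤ gromovProd y (γ • o) x := gp_nonneg _ _ _
    have hLd : gromovProd y (γ • o) x ≤ dist x (γ • o) := by
      have := gp_le_right y (γ • o) x
      linarith [dist_comm (γ • o) x]
    have hex : ∃ n : ℝ, 0 ≤ n ∧ Icc 0 n ⊆ Icc 0 (dist x y) ∧
        gromovProd y (γ • o) x - 1 ≤ gromovProd (c n) (γ • o) x :=
      ⟨dist x y, dist_nonneg, subset_rfl, by rw [hcy]; linarith⟩
    obtain ⟨β, q, hdecomp, hgp0, hqβ, hLq, hcb⟩ :=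
      core hδ hhyp hgeo hact o hk hok hDk0 hDk hKdef hx hc0 hgeod hcK γ hL0 hLd hex
    refine ⟨β, ?_, ?_, ?_, ?_⟩
    · obtain ⟨s, hs, g, hg, hβ⟩ := hdecomp
      exact ⟨s, hSfin.mem_toFinset.2 hs, g, hg, hβ⟩
    · have h1 := gromovProd_ge x (γ • o) (β • o) q
      rw [hgp0] at h1
      have h2 : dist (β • o) q = dist q (β • o) := dist_comm _ _
      linarith
    · show ((gromovProd y (γ • o) (β • o) : ℝ) : EReal) ≤ ((40*δ + Dk + 2 : ℝ) : EReal)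
      rw [EReal.coe_le_coe_iff]
      have h1 := hcb (dist x y) dist_nonneg subset_rfl (by rw [hcy]; linarith)
      rw [hcy] at h1
      have h2 := gromovProd_ge y (γ • o) (β • o) q
      have h3 : dist (β • o) q = dist q (β • o) := dist_comm _ _
      linarith
    · show ((gromovProd y (γ • o) x : ℝ) : EReal)
          ≤ ((dist x (β • o) + (40*δ + Dk + 2) : ℝ) : EReal)
      rw [EReal.coe_le_coe_iff]
      have h1 := dist_triangle x (β • o) q
      have h2 : dist (β • o) q = dist q (β • o) := dist_comm _ _
      linarith
  · -- boundary case
    subst hIeq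
    obtain ⟨hseq, hmk⟩ := hends
    set f : ℕ → ℝ := fun n => gromovProd (c n) (γ • o) x with hf
    have hf0 : ∀ n, 0 ≤ f n := fun n => gp_nonneg _ _ _
    have hfM : ∀ n, f n ≤ dist x (γ • o) := fun n => by
      have := gp_le_right (c n) (γ • o) x
      have h2 := dist_comm (γ • o) x
      simp only [hf]
      linarith
    have hL0 : 0 ≤ Filter.liminf f Filter.atTop :=
      le_myliminf hfM (Filter.Eventually.of_forall hf0)
    have hLd : Filter.liminf f Filter.atTop ≤ dist x (γ • o) :=
      myliminf_le hf0 (Filter.Frequently.of_forall hfM)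
    have hex : ∃ n : ℝ, 0 ≤ n ∧ Icc 0 n ⊆ Ici 0 ∧
        Filter.liminf f Filter.atTop - 1 ≤ gromovProd (c n) (γ • o) x := by
      obtain ⟨n, hn⟩ := exists_gt_of_lt_liminf hf0
        (show Filter.liminf f Filter.atTop - 1 < Filter.liminf f Filter.atTop by linarith)
      exact ⟨(n : ℝ), Nat.cast_nonneg n, fun t ht => ht.1, le_of_lt hn⟩
    obtain ⟨β, q, hdecomp, hgp0, hqβ, hLq, hcb⟩ :=
      core hδ hhyp hgeo hact o hk hok hDk0 hDk hKdef hx hc0 hray hcK γ hL0 hLd hex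
    refine ⟨β, ?_, ?_, ?_, ?_⟩
    · obtain ⟨s, hs, g, hg, hβ⟩ := hdecomp
      exact ⟨s, hSfin.mem_toFinset.2 hs, g, hg, hβ⟩
    · have h1 := gromovProd_ge x (γ • o) (β • o) q
      rw [hgp0] at h1
      have h2 : dist (β • o) q = dist q (β • o) := dist_comm _ _
      linarith
    · show ((gpPB o (β • o) (γ • o) ξ : ℝ) : EReal) ≤ ((40*δ + Dk + 2 : ℝ) : EReal)
      rw [EReal.coe_le_coe_iff]
      refine gpPB_le ⟨fun n : ℕ => c n, hseq⟩ hmk ?_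
      refine myliminf_le (fun n => gp_nonneg _ _ _) ?_
      have hfreq : ∃ᶠ n in Filter.atTop, f n ≤ Filter.liminf f Filter.atTop + 1 :=
        frequently_le_of_liminf_lt hfM (by linarith)
      refine hfreq.mono ?_
      intro n hn
      have h1 := hcb (n : ℝ) (Nat.cast_nonneg n) (fun t ht => ht.1) hn
      have h2 := gromovProd_ge (γ • o) (c (n:ℝ)) (β • o) q
      have h3 : gromovProd (γ • o) (c (n:ℝ)) q = gromovProd (c (n:ℝ)) (γ • o) q :=
        gp_comm _ _ _
      have h4 : dist (β • o) q = dist q (β • o) := dist_comm _ _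
      show gromovProd (γ • o) (c (n:ℝ)) (β • o) ≤ 40*δ + Dk + 2
      linarith
    · show ((gpPB o x (γ • o) ξ : ℝ) : EReal)
          ≤ ((dist x (β • o) + (40*δ + Dk + 2) : ℝ) : EReal)
      rw [EReal.coe_le_coe_iff]
      have hgle : gpPB o x (γ • o) ξ ≤ Filter.liminf f Filter.atTop := by
        refine gpPB_le ⟨fun n : ℕ => c n, hseq⟩ hmk ?_
        have he : (fun n : ℕ => gromovProd (γ • o) (c (n:ℝ)) x) = f :=
          funext fun n => gp_comm _ _ _
        show Filter.liminf (fun n : ℕ => gromovProd (γ • o) (c (n:ℝ)) x) Filter.atTop ≤ _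
        rw [he]
      have h1 := dist_triangle x (β • o) q
      have h2 : dist (β • o) q = dist q (β • o) := dist_comm _ _
      linarith


end SPR
end
end

section
/- Let Γ be a countable group acting on the right on a countable set Y, let p : Γ → [0,1] be a symmetric (p(γ) = p(γ⁻¹) for all γ) probability measure with finite support, and define the Markov operator M on nonnegative functions Y → [0,∞) by (Mφ)(y) = Σ_{γ∈Γ} p(γ)·φ(yγ⁻¹). Then for all nonnegative functions u, φ : Y → [0,∞), one has Σ_{y∈Y} M(uφ)(y)·u(y)·φ(y) ≤ Σ_{y∈Y} u(y)²·φ(y)·(Mφ)(y), as an inequality in [0,∞]. -/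
open Filter Topology Metric Set MeasureTheory Pointwise
open scoped symmDiff ENNReal NNReal

noncomputable section

namespace SPR

variable {X : Type} [MetricSpace X]

variable {Γ : Type} [Group Γ] [MulAction Γ X]

private lemma two_mul_le_sq_add_sq (a b : ℝ≥0∞) : 2 * (a * b) ≤ a ^ 2 + b ^ 2 := by
  rcases eq_or_ne a ⊤ with ha | ha
  · have : a ^ 2 = ⊤ := by rw [ha, pow_two, ENNReal.top_mul_top]
    simp [this]
  · rcases eq_or_ne b ⊤ with hb | hb
    · have : b ^ 2 = ⊤ := by rw [hb, pow_two, ENNReal.top_mul_top]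
      simp [this]
    · lift a to ℝ≥0 using ha
      lift b to ℝ≥0 using hb
      rw [← ENNReal.coe_mul, ← ENNReal.coe_pow, ← ENNReal.coe_pow]
      have h2 : (2 : ℝ≥0∞) = ((2 : ℝ≥0) : ℝ≥0∞) := by norm_num
      rw [h2, ← ENNReal.coe_mul, ← ENNReal.coe_add, ENNReal.coe_le_coe, ← NNReal.coe_le_coe]
      push_cast
      nlinarith [sq_nonneg ((a : ℝ) - b)]

private def flipEquiv {Γ Y : Type} [Group Γ] (act : Y → Γ → Y)
    (hact_one : ∀ y : Y, act y 1 = y)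
    (hact_mul : ∀ (y : Y) (γ₁ γ₂ : Γ), act y (γ₁ * γ₂) = act (act y γ₁) γ₂) :
    Y × Γ ≃ Y × Γ where
  toFun q := (act q.1 q.2⁻¹, q.2⁻¹)
  invFun q := (act q.1 q.2⁻¹, q.2⁻¹)
  left_inv q := by simp [← hact_mul, hact_one]
  right_inv q := by simp [← hact_mul, hact_one]

/-- Let `Γ` act on the right on a countable set `Y`, let `p` be
a symmetric finitely supported probability measure on `Γ`, and `M` the Markov
operator `(Mφ)(y) = Σ_γ p(γ)·φ(yγ⁻¹)`. Then for all nonnegative `u, φ : Y → [0,∞)`,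
`Σ_y M(uφ)(y)·u(y)·φ(y) ≤ Σ_y u(y)²·φ(y)·(Mφ)(y)`, as an inequality in `[0,∞]`. -/
theorem markov_barta_trick
    {Γ Y : Type} [Group Γ] [Countable Γ] [Countable Y]
    (act : Y → Γ → Y)
    (hact_one : ∀ y : Y, act y 1 = y)
    (hact_mul : ∀ (y : Y) (γ₁ γ₂ : Γ), act y (γ₁ * γ₂) = act (act y γ₁) γ₂)
    (p : Γ → ℝ≥0) (hple : ∀ γ : Γ, p γ ≤ 1) (hpsymm : ∀ γ : Γ, p γ⁻¹ = p γ)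
    (hpfin : {γ : Γ | p γ ≠ 0}.Finite) (hpsum : HasSum p 1)
    (u φ : Y → ℝ≥0) :
    ∑' y : Y,
        (∑' γ : Γ, (p γ : ℝ≥0∞) * ((u (act y γ⁻¹) : ℝ≥0∞) * (φ (act y γ⁻¹) : ℝ≥0∞)))
          * (u y : ℝ≥0∞) * (φ y : ℝ≥0∞)
      ≤ ∑' y : Y, (u y : ℝ≥0∞) ^ 2 * (φ y : ℝ≥0∞) *
          (∑' γ : Γ, (p γ : ℝ≥0∞) * (φ (act y γ⁻¹) : ℝ≥0∞)) := by
  classical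
  set f : Y × Γ → ℝ≥0∞ := fun q =>
    (p q.2 : ℝ≥0∞) * ((u (act q.1 q.2⁻¹) : ℝ≥0∞) * (φ (act q.1 q.2⁻¹) : ℝ≥0∞))
      * (u q.1 : ℝ≥0∞) * (φ q.1 : ℝ≥0∞) with hf
  set g : Y × Γ → ℝ≥0∞ := fun q =>
    (u q.1 : ℝ≥0∞) ^ 2 * (φ q.1 : ℝ≥0∞) * ((p q.2 : ℝ≥0∞) * (φ (act q.1 q.2⁻¹) : ℝ≥0∞))
    with hg
  have hL : (∑' y : Y,
      (∑' γ : Γ, (p γ : ℝ≥0∞) * ((u (act y γ⁻¹) : ℝ≥0∞) * (φ (act y γ⁻¹) : ℝ≥0∞)))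
        * (u y : ℝ≥0∞) * (φ y : ℝ≥0∞)) = ∑' q : Y × Γ, f q := by
    have step : ∀ y : Y,
        (∑' γ : Γ, (p γ : ℝ≥0∞) * ((u (act y γ⁻¹) : ℝ≥0∞) * (φ (act y γ⁻¹) : ℝ≥0∞)))
          * (u y : ℝ≥0∞) * (φ y : ℝ≥0∞) = ∑' γ : Γ, f (y, γ) := fun y => by
      rw [← ENNReal.tsum_mul_right, ← ENNReal.tsum_mul_right]
    simp_rw [step]
    exact (ENNReal.tsum_prod (f := fun y γ => f (y, γ))).symm
  have hR : (∑' y : Y, (u y : ℝ≥0∞) ^ 2 * (φ y : ℝ≥0∞) *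
      (∑' γ : Γ, (p γ : ℝ≥0∞) * (φ (act y γ⁻¹) : ℝ≥0∞))) = ∑' q : Y × Γ, g q := by
    have step : ∀ y : Y, (u y : ℝ≥0∞) ^ 2 * (φ y : ℝ≥0∞) *
        (∑' γ : Γ, (p γ : ℝ≥0∞) * (φ (act y γ⁻¹) : ℝ≥0∞)) = ∑' γ : Γ, g (y, γ) := fun y => by
      rw [← ENNReal.tsum_mul_left]
    simp_rw [step]
    exact (ENNReal.tsum_prod (f := fun y γ => g (y, γ))).symm
  rw [hL, hR]
  -- the involution (y, γ) ↦ (act y γ⁻¹, γ⁻¹)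
  set e : Y × Γ ≃ Y × Γ := flipEquiv act hact_one hact_mul with hedef
  have he : ∀ q : Y × Γ, e q = (act q.1 q.2⁻¹, q.2⁻¹) := fun q => rfl
  have key : ∀ q : Y × Γ, 2 * f q ≤ g q + g (e q) := by
    rintro ⟨y, γ⟩
    have h1 : g (e (y, γ)) =
        (u (act y γ⁻¹) : ℝ≥0∞) ^ 2 * (φ (act y γ⁻¹) : ℝ≥0∞)
          * ((p γ : ℝ≥0∞) * (φ y : ℝ≥0∞)) := by
      rw [he]
      simp only [hg, hpsymm, inv_inv, ← hact_mul, inv_mul_cancel, hact_one]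
    rw [h1]
    simp only [hf, hg]
    have h2 := two_mul_le_sq_add_sq (u y : ℝ≥0∞) (u (act y γ⁻¹) : ℝ≥0∞)
    calc 2 * ((p γ : ℝ≥0∞) * ((u (act y γ⁻¹) : ℝ≥0∞) * (φ (act y γ⁻¹) : ℝ≥0∞))
          * (u y : ℝ≥0∞) * (φ y : ℝ≥0∞))
        = (2 * ((u y : ℝ≥0∞) * (u (act y γ⁻¹) : ℝ≥0∞)))
            * ((p γ : ℝ≥0∞) * (φ y : ℝ≥0∞) * (φ (act y γ⁻¹) : ℝ≥0∞)) := by ring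
      _ ≤ ((u y : ℝ≥0∞) ^ 2 + (u (act y γ⁻¹) : ℝ≥0∞) ^ 2)
            * ((p γ : ℝ≥0∞) * (φ y : ℝ≥0∞) * (φ (act y γ⁻¹) : ℝ≥0∞)) :=
          mul_le_mul_left h2 _
      _ = (u y : ℝ≥0∞) ^ 2 * (φ y : ℝ≥0∞) * ((p γ : ℝ≥0∞) * (φ (act y γ⁻¹) : ℝ≥0∞))
          + (u (act y γ⁻¹) : ℝ≥0∞) ^ 2 * (φ (act y γ⁻¹) : ℝ≥0∞)
            * ((p γ : ℝ≥0∞) * (φ y : ℝ≥0∞)) := by ring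
  have h2 : 2 * ∑' q : Y × Γ, f q ≤ 2 * ∑' q : Y × Γ, g q := by
    calc 2 * ∑' q : Y × Γ, f q = ∑' q : Y × Γ, 2 * f q := by
          rw [← ENNReal.tsum_mul_left]
      _ ≤ ∑' q : Y × Γ, (g q + g (e q)) := ENNReal.tsum_le_tsum key
      _ = (∑' q : Y × Γ, g q) + ∑' q : Y × Γ, g (e q) := ENNReal.tsum_add
      _ = 2 * ∑' q : Y × Γ, g q := by rw [e.tsum_eq g, two_mul]
  exact (ENNReal.mul_le_mul_iff_right two_ne_zero ENNReal.ofNat_ne_top).mp h2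


end SPR
end
end
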